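/- arXiv:1005.1521 — 3 statements merged into one kernel-verified Lean document; each statement's English description precedes it below -/
import Mathlib

section
/- There is a weight-preserving bijection φ on Dyck paths of length 2n such that if p has exactly v up-steps at even positions, then φ(p) has exactly v+1 peaks (where the final vertex counts as a peak if the last step is up, and a Dyck path's last step is always down, so peaks are interior); consequently, the number of Dyck paths of length 2n with v even-position up-steps equals the number of Dyck paths of length 2n with v+1 peaks. -/
open Finset
open scoped Classical

/-- Extend a finite step sequence to ℕ (false outside range). -/
def extS {m : ℕ} (s : Fin m → Bool) : ℕ → Bool :=
  fun j => if h : j < m then s ⟨j, h⟩ else false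

/-- Number of up-steps (true entries) among the first `k` steps. -/
def upsTo {m : ℕ} (s : Fin m → Bool) (k : ℕ) : ℕ :=
  ((Finset.range k).filter (fun j => extS s j = true)).card

/-- A bilateral Dyck path of length 2n: a ±1-sequence with sum 0,
encoded as a Bool sequence with exactly n `true`s. -/
def isBilateral (n : ℕ) (s : Fin (2*n) → Bool) : Prop := upsTo s (2*n) = n

/-- A Dyck path of length 2n: sum 0 and all partial sums nonnegative
(`k ≤ 2 * upsTo s k` says #ups ≥ #downs among the first k steps). -/
def isDyck (n : ℕ) (s : Fin (2*n) → Bool) : Prop :=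
  upsTo s (2*n) = n ∧ ∀ k ≤ 2*n, k ≤ 2 * upsTo s k

/-- Interior peaks: 1-indexed positions i (1 ≤ i ≤ m-1) with step i up
and step i+1 down; 0-indexed j = i-1 ranges over `range (m-1)`. -/
def interiorPeaks {m : ℕ} (s : Fin m → Bool) : ℕ :=
  ((Finset.range (m-1)).filter (fun j => extS s j = true ∧ extS s (j+1) = false)).card

/-- Peaks with the boundary convention: the initial vertex is a peak if the
first step is down, the final vertex is a peak if the last step is up. -/
def bPeaks (n : ℕ) (s : Fin (2*n) → Bool) : ℕ :=
  interiorPeaks s + (if extS s 0 = false then 1 else 0)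
    + (if extS s (2*n-1) = true then 1 else 0)

/-- Number of up-steps at even 1-indexed positions (odd 0-indexed). -/
def evenUps (n : ℕ) (s : Fin (2*n) → Bool) : ℕ :=
  ((Finset.range (2*n)).filter (fun j => j % 2 = 1 ∧ extS s j = true)).card

/-- Number of up-steps at odd 1-indexed positions (even 0-indexed). -/
def oddUps (n : ℕ) (s : Fin (2*n) → Bool) : ℕ :=
  ((Finset.range (2*n)).filter (fun j => j % 2 = 0 ∧ extS s j = true)).card

/-- Number of ones (arrows) in a Boolean sequence. -/
def ones {m : ℕ} (f : Fin m → Bool) : ℕ := upsTo f m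

/-- 1-indexed position of the h-th one in `f`: the least `k` such that the
first `k` entries contain exactly `h` ones. -/
noncomputable def nthOnePos {m : ℕ} (f : Fin m → Bool) (h : ℕ) : ℕ := sInf {k | upsTo f k = h}

/-- A checkmark pair of size n. -/
def isCheckPair (n : ℕ) (p : (Fin n → Bool) × (Fin (n-1) → Bool)) : Prop :=
  ones p.1 = ones p.2 ∨ ones p.1 = ones p.2 + 1

/-- A Dyck checkmark pair of size n. -/
def isDyckCheckPair (n : ℕ) (p : (Fin n → Bool) × (Fin (n-1) → Bool)) : Prop :=
  isCheckPair n p ∧ ∀ h, 1 ≤ h → h ≤ ones p.2 → nthOnePos p.2 h < nthOnePos p.1 h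

/-- Narayana number N(n,v) = C(n,v)C(n-1,v)/(v+1). -/
def narayana (n v : ℕ) : ℕ := n.choose v * (n-1).choose v / (v + 1)

/-- The bijection φ: s_NW(i) = 1 iff step 2i-1 (1-indexed) is down;
s_SW(i) = 1 iff step 2i (1-indexed) is up. -/
def phiMap (n : ℕ) (s : Fin (2*n) → Bool) : (Fin n → Bool) × (Fin (n-1) → Bool) :=
  (fun i => ! extS s (2*(i:ℕ)), fun i => extS s (2*(i:ℕ)+1))

/-- Height (#ups − #downs) before step j (0-indexed). -/
def height {m : ℕ} (s : Fin m → Bool) (j : ℕ) : ℤ := 2 * (upsTo s j : ℤ) - j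

/-- Step j lies in an odd band: an up-step from even height, or a down-step
from odd height. -/
def inOddBand {m : ℕ} (s : Fin m → Bool) (j : ℕ) : Prop :=
  (extS s j = true ∧ Even (height s j)) ∨ (extS s j = false ∧ Odd (height s j))

namespace Stmt15

noncomputable def cnt (P : ℕ → Prop) (k : ℕ) : ℕ := ((Finset.range k).filter P).card

lemma card_filter_irrel {α : Type*} (s : Finset α) (p : α → Prop)
    (h1 h2 : DecidablePred p) :
    (@Finset.filter α p h1 s).card = (@Finset.filter α p h2 s).card := by
  congr!

lemma cnt_zero (P : ℕ → Prop) : cnt P 0 = 0 := by simp [cnt]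

lemma cnt_succ (P : ℕ → Prop) (k : ℕ) :
    cnt P (k+1) = cnt P k + (if P k then 1 else 0) := by
  unfold cnt
  rw [Finset.range_add_one, Finset.filter_insert]
  split
  · rw [Finset.card_insert_of_notMem (by simp)]
  · simp

lemma cnt_congr (P Q : ℕ → Prop) (k : ℕ) (h : ∀ j < k, (P j ↔ Q j)) :
    cnt P k = cnt Q k := by
  unfold cnt
  congr 1
  apply Finset.filter_congr
  intro x hx
  exact h x (Finset.mem_range.mp hx)

lemma cnt_add (P : ℕ → Prop) (c d : ℕ) :
    cnt P (c + d) = cnt P c + cnt (fun j => P (c + j)) d := by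
  induction d with
  | zero => simp [cnt_zero]
  | succ d ih =>
      have : c + (d+1) = (c + d) + 1 := by omega
      rw [this, cnt_succ, ih, cnt_succ]
      ring

lemma upsTo_eq_cnt {m : ℕ} (s : Fin m → Bool) (k : ℕ) :
    upsTo s k = cnt (fun j => extS s j = true) k := by
  unfold upsTo cnt
  apply card_filter_irrel

lemma evenUps_eq_cnt (n : ℕ) (s : Fin (2*n) → Bool) :
    evenUps n s = cnt (fun j => j % 2 = 1 ∧ extS s j = true) (2*n) := by
  unfold evenUps cnt
  apply card_filter_irrel

lemma oddUps_eq_cnt (n : ℕ) (s : Fin (2*n) → Bool) :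
    oddUps n s = cnt (fun j => j % 2 = 0 ∧ extS s j = true) (2*n) := by
  unfold oddUps cnt
  apply card_filter_irrel

lemma interiorPeaks_eq_cnt {m : ℕ} (s : Fin m → Bool) :
    interiorPeaks s = cnt (fun j => extS s j = true ∧ extS s (j+1) = false) (m-1) := by
  unfold interiorPeaks cnt
  apply card_filter_irrel

lemma upsTo_succ {m : ℕ} (s : Fin m → Bool) (k : ℕ) :
    upsTo s (k+1) = upsTo s k + (if extS s k = true then 1 else 0) := by
  rw [upsTo_eq_cnt, upsTo_eq_cnt, cnt_succ]
  split_ifs <;> rfl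

lemma upsTo_mono {m : ℕ} (s : Fin m → Bool) {k l : ℕ} (h : k ≤ l) :
    upsTo s k ≤ upsTo s l := by
  unfold upsTo
  exact Finset.card_le_card (Finset.filter_subset_filter _ (by simpa using h))

lemma upsTo_le {m : ℕ} (s : Fin m → Bool) (k : ℕ) : upsTo s k ≤ k := by
  unfold upsTo
  calc _ ≤ (Finset.range k).card := Finset.card_filter_le _ _
  _ = k := Finset.card_range k

lemma extS_lt {m : ℕ} (s : Fin m → Bool) (j : ℕ) (h : j < m) :
    extS s j = s ⟨j, h⟩ := by simp [extS, h]

lemma extS_ge {m : ℕ} (s : Fin m → Bool) (j : ℕ) (h : m ≤ j) :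
    extS s j = false := by simp [extS]; omega

/-! ### The concatenation map -/

def comb (m a : ℕ) (p q : ℕ → Bool) : Fin m → Bool :=
  fun i => if (i:ℕ) = 0 then true
    else if (i:ℕ) ≤ 2*a then p ((i:ℕ)-1)
    else if (i:ℕ) = 2*a+1 then false
    else q ((i:ℕ)-(2*a+2))

lemma extS_comb {m a : ℕ} (p q : ℕ → Bool) (j : ℕ) (h : j < m) :
    extS (comb m a p q) j
      = if j = 0 then true else if j ≤ 2*a then p (j-1)
        else if j = 2*a+1 then false else q (j-(2*a+2)) := by
  rw [extS_lt _ j h]; rfl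

section CombLemmas

variable {a b m : ℕ} (p0 : Fin (2*a) → Bool) (q0 : Fin (2*b) → Bool)

lemma comb_zero (hm : m = 2*a+2*b+2) :
    extS (comb m a (extS p0) (extS q0)) 0 = true := by
  rw [extS_comb _ _ 0 (by omega)]; simp

lemma comb_p (hm : m = 2*a+2*b+2) (j : ℕ) (h1 : 1 ≤ j) (h2 : j ≤ 2*a) :
    extS (comb m a (extS p0) (extS q0)) j = extS p0 (j-1) := by
  rw [extS_comb _ _ j (by omega)]
  simp only [if_neg (by omega : ¬ j = 0), if_pos h2]

lemma comb_D (hm : m = 2*a+2*b+2) :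
    extS (comb m a (extS p0) (extS q0)) (2*a+1) = false := by
  rw [extS_comb _ _ _ (by omega)]
  simp

lemma comb_q (hm : m = 2*a+2*b+2) (j : ℕ) (h : 2*a+2 ≤ j) :
    extS (comb m a (extS p0) (extS q0)) j = extS q0 (j-(2*a+2)) := by
  by_cases hj : j < m
  · rw [extS_comb _ _ j hj]
    simp only [if_neg (by omega : ¬ j = 0), if_neg (by omega : ¬ j ≤ 2*a),
      if_neg (by omega : ¬ j = 2*a+1)]
  · rw [extS_ge _ j (by omega), extS_ge _ _ (by omega)]

lemma upsTo_comb_low (hm : m = 2*a+2*b+2) :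
    ∀ k, 1 ≤ k → k ≤ 2*a+1 → upsTo (comb m a (extS p0) (extS q0)) k = 1 + upsTo p0 (k-1) := by
  intro k
  induction k with
  | zero => omega
  | succ k ih =>
      intro _ hk2
      rcases Nat.eq_zero_or_pos k with hk0 | hk0
      · subst hk0
        rw [upsTo_succ, comb_zero p0 q0 hm]
        simp [upsTo]
      · rw [upsTo_succ, ih (by omega) (by omega), comb_p p0 q0 hm k hk0 (by omega)]
        have : k = (k-1) + 1 := by omega
        rw [show k + 1 - 1 = (k-1)+1 by omega, upsTo_succ]
        omega

lemma upsTo_comb_high (hm : m = 2*a+2*b+2) (hpa : upsTo p0 (2*a) = a) :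
    ∀ k, 2*a+2 ≤ k → upsTo (comb m a (extS p0) (extS q0)) k = a+1+ upsTo q0 (k-(2*a+2)) := by
  intro k
  induction k with
  | zero => omega
  | succ k ih =>
      intro hk
      rcases Nat.lt_or_ge k (2*a+2) with hk2 | hk2
      · have hk2' : k = 2*a+1 := by omega
        subst hk2'
        rw [upsTo_succ, comb_D p0 q0 hm, upsTo_comb_low p0 q0 hm (2*a+1) (by omega) (by omega),
          show 2*a+1-1 = 2*a by omega, hpa, show 2*a+1+1-(2*a+2) = 0 by omega]
        simp [upsTo]
        omega
      · rw [upsTo_succ, ih hk2, comb_q p0 q0 hm k hk2]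
        rw [show k + 1 - (2*a+2) = (k - (2*a+2)) + 1 by omega, upsTo_succ]
        omega

lemma isDyck_comb (hm : m = 2*a+2*b+2) (hp : isDyck a p0) (hq : isDyck b q0) :
    upsTo (comb m a (extS p0) (extS q0)) m = a+b+1
      ∧ ∀ k ≤ m, k ≤ 2 * upsTo (comb m a (extS p0) (extS q0)) k := by
  obtain ⟨hp1, hp2⟩ := hp
  obtain ⟨hq1, hq2⟩ := hq
  constructor
  · rw [upsTo_comb_high p0 q0 hm hp1 m (by omega),
      show m - (2*a+2) = 2*b by omega, hq1]
    omega
  · intro k hk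
    rcases Nat.eq_zero_or_pos k with h0 | h0
    · omega
    rcases Nat.lt_or_ge k (2*a+2) with h1 | h1
    · rw [upsTo_comb_low p0 q0 hm k h0 (by omega)]
      have := hp2 (k-1) (by omega)
      omega
    · rw [upsTo_comb_high p0 q0 hm hp1 k h1]
      have := hq2 (k-(2*a+2)) (by omega)
      omega

lemma firstRet_comb (hm : m = 2*a+2*b+2) (hp : isDyck a p0) :
    upsTo (comb m a (extS p0) (extS q0)) (2*a+2) = a+1
      ∧ ∀ k, 1 ≤ k → k ≤ a → upsTo (comb m a (extS p0) (extS q0)) (2*k) ≠ k := by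
  obtain ⟨hp1, hp2⟩ := hp
  constructor
  · rw [upsTo_comb_high p0 q0 hm hp1 (2*a+2) (by omega)]
    simp [upsTo]
  · intro k h1 h2
    rw [upsTo_comb_low p0 q0 hm (2*k) (by omega) (by omega)]
    have := hp2 (2*k-1) (by omega)
    omega

end CombLemmas

/-! ### Decomposition -/

def decP (a : ℕ) {m : ℕ} (s : Fin m → Bool) : Fin (2*a) → Bool :=
  fun i => extS s ((i:ℕ)+1)

def decQ (a b : ℕ) {m : ℕ} (s : Fin m → Bool) : Fin (2*b) → Bool :=
  fun i => extS s ((i:ℕ)+2*a+2)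

lemma funext_extS {m : ℕ} (s t : Fin m → Bool) (h : ∀ j, extS s j = extS t j) : s = t :=
  funext fun i => by
    have := h i
    rwa [extS_lt _ _ i.isLt, extS_lt _ _ i.isLt] at this

section Decomp

variable {a b m : ℕ} (s : Fin m → Bool)

lemma extS_decP (j : ℕ) (hj : j < 2*a) : extS (decP a s) j = extS s (j+1) := by
  rw [extS_lt _ j hj]; rfl

lemma extS_decQ (j : ℕ) (hj : j < 2*b) : extS (decQ a b s) j = extS s (j+2*a+2) := by
  rw [extS_lt _ j hj]; rfl

lemma s_zero (hm : m = 2*a+2*b+2) (hd2 : ∀ k ≤ m, k ≤ 2*upsTo s k) : extS s 0 = true := by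
  by_contra h
  have hb : extS s 0 = false := by simpa using h
  have h1 := hd2 1 (by omega)
  rw [show (1:ℕ) = 0 + 1 by rfl, upsTo_succ, hb] at h1
  simp [upsTo] at h1

lemma upsTo_low (hm : m = 2*a+2*b+2) (hd2 : ∀ k ≤ m, k ≤ 2*upsTo s k) :
    ∀ k ≤ 2*a, upsTo s (k+1) = 1 + upsTo (decP a s) k := by
  intro k
  induction k with
  | zero =>
      intro _
      rw [show (0:ℕ)+1 = 0+1 by rfl, upsTo_succ, s_zero s hm hd2]
      simp [upsTo]
  | succ k ih =>
      intro hk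
      rw [show k+1+1 = (k+1)+1 by rfl, upsTo_succ, ih (by omega), upsTo_succ,
        extS_decP s k (by omega)]
      ring

lemma s_2a1 (hm : m = 2*a+2*b+2) (hd2 : ∀ k ≤ m, k ≤ 2*upsTo s k)
    (hr1 : upsTo s (2*a+2) = a+1) : extS s (2*a+1) = false := by
  by_contra h
  have hb : extS s (2*a+1) = true := by simpa using h
  have h1 := hd2 (2*a+1) (by omega)
  have h2 : upsTo s (2*a+2) = upsTo s (2*a+1) + 1 := by
    rw [show 2*a+2 = (2*a+1)+1 by omega, upsTo_succ, hb]
    simp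
  omega

lemma upsTo_high (hm : m = 2*a+2*b+2) (hr1 : upsTo s (2*a+2) = a+1) :
    ∀ k ≤ 2*b, upsTo s (k+2*a+2) = a+1 + upsTo (decQ a b s) k := by
  intro k
  induction k with
  | zero => simpa [upsTo] using hr1
  | succ k ih =>
      intro hk
      rw [show k+1+2*a+2 = (k+2*a+2)+1 by omega, upsTo_succ, ih (by omega), upsTo_succ,
        extS_decQ s k (by omega)]
      ring

lemma decP_dyck (hm : m = 2*a+2*b+2) (hd2 : ∀ k ≤ m, k ≤ 2*upsTo s k)
    (hr1 : upsTo s (2*a+2) = a+1) (hr2 : ∀ k, 1 ≤ k → k ≤ a → upsTo s (2*k) ≠ k) :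
    isDyck a (decP a s) := by
  constructor
  · have h4 := upsTo_low s hm hd2 (2*a) (le_refl _)
    have h5 : upsTo s (2*a+2) = upsTo s (2*a+1) + 0 := by
      rw [show 2*a+2 = (2*a+1)+1 by omega, upsTo_succ, s_2a1 s hm hd2 hr1]
      simp
    omega
  · intro k hk
    have hlow := upsTo_low s hm hd2 k hk
    have h1 := hd2 (k+1) (by omega)
    rw [hlow] at h1
    rcases Nat.even_or_odd k with he | ho
    · obtain ⟨j, hj⟩ := he
      omega
    · obtain ⟨j, hj⟩ := ho
      have h2 := hd2 (2*j+2) (by omega)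
      have h3 := hr2 (j+1) (by omega) (by omega)
      have h4 := upsTo_low s hm hd2 (2*j+1) (by omega)
      rw [show 2*(j+1) = 2*j+1+1 by ring] at h3
      rw [show 2*j+2 = 2*j+1+1 by ring] at h2
      subst hj
      omega

lemma decQ_dyck (hm : m = 2*a+2*b+2) (hd1 : upsTo s m = a+b+1)
    (hd2 : ∀ k ≤ m, k ≤ 2*upsTo s k) (hr1 : upsTo s (2*a+2) = a+1) :
    isDyck b (decQ a b s) := by
  constructor
  · have h4 := upsTo_high s hm hr1 (2*b) (le_refl _)
    rw [show 2*b+2*a+2 = m by omega] at h4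
    omega
  · intro k hk
    have h4 := upsTo_high s hm hr1 k hk
    have h1 := hd2 (k+2*a+2) (by omega)
    omega

lemma s_eq_comb (hm : m = 2*a+2*b+2) (hd2 : ∀ k ≤ m, k ≤ 2*upsTo s k)
    (hr1 : upsTo s (2*a+2) = a+1) :
    s = comb m a (extS (decP a s)) (extS (decQ a b s)) := by
  apply funext_extS
  intro j
  rcases Nat.eq_zero_or_pos j with h0 | h0
  · subst h0
    rw [comb_zero _ _ hm, s_zero s hm hd2]
  rcases Nat.lt_or_ge j (2*a+1) with h1 | h1
  · rw [comb_p _ _ hm j h0 (by omega), extS_decP s (j-1) (by omega),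
      show j-1+1 = j by omega]
  rcases Nat.eq_or_lt_of_le h1 with h2 | h2
  · rw [← h2, comb_D _ _ hm, s_2a1 s hm hd2 hr1]
  rcases Nat.lt_or_ge j m with h3 | h3
  · rw [comb_q _ _ hm j (by omega), extS_decQ s (j-(2*a+2)) (by omega),
      show j-(2*a+2)+2*a+2 = j by omega]
  · rw [extS_ge _ j (by omega), comb_q _ _ hm j (by omega),
      extS_ge _ _ (by omega)]

end Decomp

section DecompComb

variable {a b m : ℕ} (p0 : Fin (2*a) → Bool) (q0 : Fin (2*b) → Bool)

lemma decP_comb (hm : m = 2*a+2*b+2) :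
    decP a (comb m a (extS p0) (extS q0)) = p0 := by
  funext i
  show extS (comb m a (extS p0) (extS q0)) ((i:ℕ)+1) = p0 i
  rw [comb_p _ _ hm ((i:ℕ)+1) (by omega) (by omega)]
  simp [extS_lt _ (i:ℕ) i.isLt]

lemma decQ_comb (hm : m = 2*a+2*b+2) :
    decQ a b (comb m a (extS p0) (extS q0)) = q0 := by
  funext i
  show extS (comb m a (extS p0) (extS q0)) ((i:ℕ)+2*a+2) = q0 i
  rw [comb_q _ _ hm _ (by omega), show (i:ℕ)+2*a+2-(2*a+2) = (i:ℕ) by omega]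
  simp [extS_lt _ (i:ℕ) i.isLt]

end DecompComb

/-! ### Statistics of comb -/

section Stats

variable {a b m : ℕ} (p0 : Fin (2*a) → Bool) (q0 : Fin (2*b) → Bool)

lemma dyck_first (ha : 1 ≤ a) (hp : isDyck a p0) : extS p0 0 = true := by
  by_contra h
  have hb : extS p0 0 = false := by simpa using h
  have h1 := hp.2 1 (by omega)
  rw [show (1:ℕ) = 0+1 by rfl, upsTo_succ, hb] at h1
  simp [upsTo] at h1

lemma dyck_last (ha : 1 ≤ a) (hp : isDyck a p0) : extS p0 (2*a-1) = false := by
  obtain ⟨hp1, hp2⟩ := hp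
  by_contra h
  have hb : extS p0 (2*a-1) = true := by simpa using h
  have h1 := hp2 (2*a-1) (by omega)
  have h2 : upsTo p0 ((2*a-1)+1) = upsTo p0 (2*a) := by congr 1; omega
  rw [upsTo_succ, hb] at h2
  simp at h2
  omega

lemma cnt_split_main (hm : m = 2*a+2*b+2) (P : ℕ → Prop) :
    cnt P m = cnt P (2*a+2) + cnt (fun j => P ((2*a+2)+j)) (2*b) := by
  rw [← cnt_add]
  congr 1
  omega

lemma cnt_split_low (P : ℕ → Prop) :
    cnt P (2*a+2) = cnt P 1 + cnt (fun j => P (1+j)) (2*a)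
      + (if P (1+2*a) then 1 else 0) := by
  rw [show 2*a+2 = (1+2*a)+1 by omega, cnt_succ, cnt_add]

lemma cnt_one (P : ℕ → Prop) : cnt P 1 = if P 0 then 1 else 0 := by
  rw [cnt_succ, cnt_zero]
  omega

lemma evenUps_comb (hm : m = 2*a+2*b+2) :
    cnt (fun j => j % 2 = 1 ∧ extS (comb m a (extS p0) (extS q0)) j = true) m
      = oddUps a p0 + evenUps b q0 := by
  rw [cnt_split_main hm, cnt_split_low]
  have h0 : cnt (fun j => j % 2 = 1 ∧ extS (comb m a (extS p0) (extS q0)) j = true) 1 = 0 := by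
    rw [cnt_one, if_neg]
    simp
  have hD : ¬ ((1 + 2*a) % 2 = 1 ∧ extS (comb m a (extS p0) (extS q0)) (1+2*a) = true) := by
    rw [show 1+2*a = 2*a+1 by omega, comb_D p0 q0 hm]
    simp
  have hmid : cnt (fun j => (1+j) % 2 = 1
        ∧ extS (comb m a (extS p0) (extS q0)) (1+j) = true) (2*a)
      = cnt (fun j => j % 2 = 0 ∧ extS p0 j = true) (2*a) := by
    apply cnt_congr
    intro j hj
    rw [comb_p p0 q0 hm (1+j) (by omega) (by omega), show 1+j-1 = j by omega]
    constructor
    · rintro ⟨h1, h2⟩; exact ⟨by omega, h2⟩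
    · rintro ⟨h1, h2⟩; exact ⟨by omega, h2⟩
  have hhigh : cnt (fun j => ((2*a+2)+j) % 2 = 1
        ∧ extS (comb m a (extS p0) (extS q0)) ((2*a+2)+j) = true) (2*b)
      = cnt (fun j => j % 2 = 1 ∧ extS q0 j = true) (2*b) := by
    apply cnt_congr
    intro j hj
    rw [comb_q p0 q0 hm ((2*a+2)+j) (by omega), show (2*a+2)+j - (2*a+2) = j by omega]
    constructor
    · rintro ⟨h1, h2⟩; exact ⟨by omega, h2⟩
    · rintro ⟨h1, h2⟩; exact ⟨by omega, h2⟩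
  rw [h0, if_neg hD, hmid, hhigh, oddUps_eq_cnt, evenUps_eq_cnt]
  omega

lemma oddUps_comb (hm : m = 2*a+2*b+2) :
    cnt (fun j => j % 2 = 0 ∧ extS (comb m a (extS p0) (extS q0)) j = true) m
      = 1 + evenUps a p0 + oddUps b q0 := by
  rw [cnt_split_main hm, cnt_split_low]
  have h0 : cnt (fun j => j % 2 = 0 ∧ extS (comb m a (extS p0) (extS q0)) j = true) 1 = 1 := by
    rw [cnt_one, if_pos ⟨by omega, comb_zero p0 q0 hm⟩]
  have hD : ¬ ((1 + 2*a) % 2 = 0 ∧ extS (comb m a (extS p0) (extS q0)) (1+2*a) = true) := by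
    rw [show 1+2*a = 2*a+1 by omega, comb_D p0 q0 hm]
    simp
  have hmid : cnt (fun j => (1+j) % 2 = 0
        ∧ extS (comb m a (extS p0) (extS q0)) (1+j) = true) (2*a)
      = cnt (fun j => j % 2 = 1 ∧ extS p0 j = true) (2*a) := by
    apply cnt_congr
    intro j hj
    rw [comb_p p0 q0 hm (1+j) (by omega) (by omega), show 1+j-1 = j by omega]
    constructor
    · rintro ⟨h1, h2⟩; exact ⟨by omega, h2⟩
    · rintro ⟨h1, h2⟩; exact ⟨by omega, h2⟩
  have hhigh : cnt (fun j => ((2*a+2)+j) % 2 = 0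
        ∧ extS (comb m a (extS p0) (extS q0)) ((2*a+2)+j) = true) (2*b)
      = cnt (fun j => j % 2 = 0 ∧ extS q0 j = true) (2*b) := by
    apply cnt_congr
    intro j hj
    rw [comb_q p0 q0 hm ((2*a+2)+j) (by omega), show (2*a+2)+j - (2*a+2) = j by omega]
    constructor
    · rintro ⟨h1, h2⟩; exact ⟨by omega, h2⟩
    · rintro ⟨h1, h2⟩; exact ⟨by omega, h2⟩
  rw [h0, if_neg hD, hmid, hhigh, oddUps_eq_cnt, evenUps_eq_cnt]
  omega

lemma cnt_split_peak (hm : m = 2*a+2*b+2) (P : ℕ → Prop) :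
    cnt P (m-1) = cnt P (2*a+1) + cnt (fun j => P ((2*a+1)+j)) (2*b) := by
  rw [← cnt_add]
  congr 1
  omega

lemma cnt_split_pblock (ha : 1 ≤ a) (P : ℕ → Prop) :
    cnt P (2*a+1) = cnt P 1 + cnt (fun j => P (1+j)) (2*a-1)
      + (if P (1+(2*a-1)) then 1 else 0) := by
  rw [show 2*a+1 = (1+(2*a-1))+1 by omega, cnt_succ, cnt_add]

lemma cnt_split_qblock (hb : 1 ≤ b) (P : ℕ → Prop) :
    cnt P (2*b) = cnt P 1 + cnt (fun j => P (1+j)) (2*b-1) := by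
  conv_lhs => rw [show 2*b = 1+(2*b-1) by omega]
  rw [cnt_add]

lemma peaks_comb (hm : m = 2*a+2*b+2) (hp : isDyck a p0) (hq : isDyck b q0) :
    cnt (fun j => extS (comb m a (extS p0) (extS q0)) j = true
        ∧ extS (comb m a (extS p0) (extS q0)) (j+1) = false) (m-1)
      = (if a = 0 then 1 else interiorPeaks p0) + interiorPeaks q0 := by
  rw [cnt_split_peak hm]
  congr 1
  · by_cases ha : a = 0
    · rw [if_pos ha]
      subst ha
      rw [show 2*0+1 = 1 by omega, cnt_one, if_pos]
      refine ⟨comb_zero p0 q0 hm, ?_⟩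
      rw [show (0:ℕ)+1 = 2*0+1 by omega, comb_D p0 q0 hm]
    · rw [if_neg ha, cnt_split_pblock (by omega)]
      have h0 : cnt (fun j => extS (comb m a (extS p0) (extS q0)) j = true
            ∧ extS (comb m a (extS p0) (extS q0)) (j+1) = false) 1 = 0 := by
        rw [cnt_one, if_neg]
        rintro ⟨-, h2⟩
        rw [show (0:ℕ)+1 = 1 by rfl, comb_p p0 q0 hm 1 (by omega) (by omega),
          show (1:ℕ)-1 = 0 by rfl, dyck_first p0 (by omega) hp] at h2
        simp at h2
      have hD : ¬ (extS (comb m a (extS p0) (extS q0)) (1+(2*a-1)) = true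
            ∧ extS (comb m a (extS p0) (extS q0)) (1+(2*a-1)+1) = false) := by
        rintro ⟨h1, -⟩
        rw [show 1+(2*a-1) = 2*a by omega, comb_p p0 q0 hm (2*a) (by omega) (by omega),
          dyck_last p0 (by omega) hp] at h1
        simp at h1
      have hmid : cnt (fun j => extS (comb m a (extS p0) (extS q0)) (1+j) = true
            ∧ extS (comb m a (extS p0) (extS q0)) (1+j+1) = false) (2*a-1)
          = cnt (fun j => extS p0 j = true ∧ extS p0 (j+1) = false) (2*a-1) := by
        apply cnt_congr
        intro j hj
        rw [comb_p p0 q0 hm (1+j) (by omega) (by omega), show 1+j-1 = j by omega,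
          comb_p p0 q0 hm (1+j+1) (by omega) (by omega), show 1+j+1-1 = j+1 by omega]
      rw [h0, if_neg hD, hmid, interiorPeaks_eq_cnt]
      omega
  · by_cases hb : b = 0
    · subst hb
      rw [interiorPeaks_eq_cnt]
      have e1 : cnt (fun j => extS (comb m a (extS p0) (extS q0)) ((2*a+1)+j) = true
            ∧ extS (comb m a (extS p0) (extS q0)) ((2*a+1)+j+1) = false) (2*0) = 0 :=
        cnt_zero _
      have e2 : cnt (fun j => extS q0 j = true ∧ extS q0 (j+1) = false) (2*0-1) = 0 :=
        cnt_zero _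
      rw [e1, e2]
    · rw [cnt_split_qblock (by omega)]
      have h0 : cnt (fun j => extS (comb m a (extS p0) (extS q0)) ((2*a+1)+j) = true
            ∧ extS (comb m a (extS p0) (extS q0)) ((2*a+1)+j+1) = false) 1 = 0 := by
        rw [cnt_one, if_neg]
        rintro ⟨h1, -⟩
        rw [show (2*a+1)+0 = 2*a+1 by omega, comb_D p0 q0 hm] at h1
        simp at h1
      have hmid : cnt (fun j => extS (comb m a (extS p0) (extS q0)) ((2*a+1)+(1+j)) = true
            ∧ extS (comb m a (extS p0) (extS q0)) ((2*a+1)+(1+j)+1) = false) (2*b-1)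
          = cnt (fun j => extS q0 j = true ∧ extS q0 (j+1) = false) (2*b-1) := by
        apply cnt_congr
        intro j hj
        rw [comb_q p0 q0 hm ((2*a+1)+(1+j)) (by omega),
          show (2*a+1)+(1+j) - (2*a+2) = j by omega,
          comb_q p0 q0 hm ((2*a+1)+(1+j)+1) (by omega),
          show (2*a+1)+(1+j)+1 - (2*a+2) = j+1 by omega]
      rw [h0, hmid, interiorPeaks_eq_cnt]
      omega

end Stats

/-! ### Counting -/

noncomputable def Ec (n v : ℕ) : ℕ :=
  ((Finset.univ : Finset (Fin (2*n) → Bool)).filter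
    (fun s => isDyck n s ∧ evenUps n s = v)).card

noncomputable def Oc (n v : ℕ) : ℕ :=
  ((Finset.univ : Finset (Fin (2*n) → Bool)).filter
    (fun s => isDyck n s ∧ oddUps n s = v)).card

noncomputable def Ic (n v : ℕ) : ℕ :=
  ((Finset.univ : Finset (Fin (2*n) → Bool)).filter
    (fun s => isDyck n s ∧ interiorPeaks s = v)).card

def firstRetAt (a : ℕ) {m : ℕ} (s : Fin m → Bool) : Prop :=
  upsTo s (2*a+2) = a+1 ∧ ∀ k, 1 ≤ k → k ≤ a → upsTo s (2*k) ≠ k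

lemma firstRet_exists {n : ℕ} (s : Fin (2*(n+1)) → Bool) (hs : isDyck (n+1) s) :
    ∃ a ≤ n, firstRetAt a s := by
  classical
  have hQn : upsTo s (2*(n+1)) = n+1 := hs.1
  have hex : ∃ k, upsTo s (2*(k+1)) = k+1 := ⟨n, hQn⟩
  set a := Nat.find hex with ha
  refine ⟨a, Nat.find_min' hex hQn, ?_, ?_⟩
  · have := Nat.find_spec hex
    rw [show 2*a+2 = 2*(a+1) by ring]
    exact this
  · intro k hk1 hk2 hk3
    have : k - 1 < a := by omega
    have hmin := Nat.find_min hex this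
    rw [show 2*(k-1+1) = 2*k by omega, show k-1+1 = k by omega] at hmin
    exact hmin hk3

lemma firstRet_unique {m : ℕ} (s : Fin m → Bool) (a a' : ℕ)
    (h : firstRetAt a s) (h' : firstRetAt a' s) : a = a' := by
  by_contra hne
  rcases Nat.lt_or_ge a a' with hlt | hge
  · exact h'.2 (a+1) (by omega) (by omega) (by rw [show 2*(a+1) = 2*a+2 by ring]; exact h.1)
  · exact h.2 (a'+1) (by omega) (by omega) (by rw [show 2*(a'+1) = 2*a'+2 by ring]; exact h'.1)

/-- Generic pair-counting lemma. -/
lemma card_pair_filter {α β : Type*} [Fintype α] [Fintype β]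
    (Pa : α → Prop) (Pb : β → Prop) (f : α → ℕ) (g : β → ℕ) (v : ℕ) :
    ((Finset.univ : Finset (α × β)).filter
        (fun pq => (Pa pq.1 ∧ Pb pq.2) ∧ f pq.1 + g pq.2 = v)).card
      = ∑ j ∈ Finset.range (v+1),
          ((Finset.univ : Finset α).filter (fun p => Pa p ∧ f p = j)).card
          * ((Finset.univ : Finset β).filter (fun q => Pb q ∧ g q = v - j)).card := by
  classical
  have hset : ((Finset.univ : Finset (α × β)).filter
        (fun pq => (Pa pq.1 ∧ Pb pq.2) ∧ f pq.1 + g pq.2 = v))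
      = (Finset.range (v+1)).biUnion (fun j =>
          ((Finset.univ : Finset α).filter (fun p => Pa p ∧ f p = j))
          ×ˢ ((Finset.univ : Finset β).filter (fun q => Pb q ∧ g q = v - j))) := by
    ext pq
    simp only [Finset.mem_filter, Finset.mem_biUnion, Finset.mem_range,
      Finset.mem_product, Finset.mem_univ, true_and]
    constructor
    · rintro ⟨⟨h1, h2⟩, h3⟩
      exact ⟨f pq.1, by omega, ⟨h1, rfl⟩, ⟨h2, by omega⟩⟩
    · rintro ⟨j, hj, ⟨h1, h2⟩, ⟨h3, h4⟩⟩
      exact ⟨⟨h1, h3⟩, by omega⟩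
  rw [hset, Finset.card_biUnion]
  · apply Finset.sum_congr rfl
    intro j _
    rw [Finset.card_product]
  · intro x hx y hy hxy
    simp only [Finset.disjoint_left, Finset.mem_product, Finset.mem_filter]
    rintro pq ⟨⟨-, -, h1⟩, -⟩ ⟨⟨-, -, h2⟩, -⟩
    exact hxy (h1 ▸ h2 ▸ rfl)

/-- The generic first-return recurrence. -/
lemma recurrence_generic (n v : ℕ)
    (statW : (Fin (2*(n+1)) → Bool) → ℕ)
    (statP : ∀ a : ℕ, (Fin (2*a) → Bool) → ℕ)
    (statQ : ∀ b : ℕ, (Fin (2*b) → Bool) → ℕ)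
    (hcompat : ∀ a, a ≤ n → ∀ (p0 : Fin (2*a) → Bool) (q0 : Fin (2*(n-a)) → Bool),
      isDyck a p0 → isDyck (n-a) q0 →
      statW (comb (2*(n+1)) a (extS p0) (extS q0)) = statP a p0 + statQ (n-a) q0) :
    ((Finset.univ : Finset (Fin (2*(n+1)) → Bool)).filter
        (fun s => isDyck (n+1) s ∧ statW s = v)).card
      = ∑ a ∈ Finset.range (n+1), ∑ j ∈ Finset.range (v+1),
          ((Finset.univ : Finset (Fin (2*a) → Bool)).filter
            (fun p => isDyck a p ∧ statP a p = j)).card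
          * ((Finset.univ : Finset (Fin (2*(n-a)) → Bool)).filter
            (fun q => isDyck (n-a) q ∧ statQ (n-a) q = v - j)).card := by
  classical
  have hsplit : ((Finset.univ : Finset (Fin (2*(n+1)) → Bool)).filter
        (fun s => isDyck (n+1) s ∧ statW s = v))
      = (Finset.range (n+1)).biUnion (fun a =>
          (Finset.univ : Finset (Fin (2*(n+1)) → Bool)).filter
            (fun s => (isDyck (n+1) s ∧ statW s = v) ∧ firstRetAt a s)) := by
    ext s
    simp only [Finset.mem_filter, Finset.mem_biUnion, Finset.mem_range, Finset.mem_univ,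
      true_and]
    constructor
    · rintro ⟨h1, h2⟩
      obtain ⟨a, ha, hfr⟩ := firstRet_exists s h1
      exact ⟨a, by omega, ⟨h1, h2⟩, hfr⟩
    · rintro ⟨a, -, h, -⟩
      exact h
  rw [hsplit, Finset.card_biUnion]
  · apply Finset.sum_congr rfl
    intro a ha
    rw [Finset.mem_range] at ha
    have ha' : a ≤ n := by omega
    have hm : 2*(n+1) = 2*a+2*(n-a)+2 := by omega
    -- bijection with pairs
    rw [show ((Finset.univ : Finset (Fin (2*(n+1)) → Bool)).filter
          (fun s => (isDyck (n+1) s ∧ statW s = v) ∧ firstRetAt a s)).card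
        = ((Finset.univ : Finset ((Fin (2*a) → Bool) × (Fin (2*(n-a)) → Bool))).filter
          (fun pq => (isDyck a pq.1 ∧ isDyck (n-a) pq.2)
            ∧ statP a pq.1 + statQ (n-a) pq.2 = v)).card from ?_]
    · exact card_pair_filter _ _ _ _ v
    · apply Finset.card_bij'
        (i := fun s _ => (decP a s, decQ a (n-a) s))
        (j := fun pq _ => comb (2*(n+1)) a (extS pq.1) (extS pq.2))
      · -- membership forward
        intro s hs
        rw [Finset.mem_filter] at hs ⊢
        obtain ⟨-, ⟨⟨hd1, hd2⟩, hstat⟩, ⟨hr1, hr2⟩⟩ := hs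
        have hd1' : upsTo s (2*(n+1)) = a + (n-a) + 1 := by omega
        have hpd := decP_dyck s hm hd2 hr1 hr2
        have hqd := decQ_dyck s hm hd1' hd2 hr1
        refine ⟨Finset.mem_univ _, ⟨hpd, hqd⟩, ?_⟩
        have hs_eq := s_eq_comb s hm hd2 hr1
        rw [← hcompat a ha' _ _ hpd hqd, ← hs_eq]
        exact hstat
      · -- membership backward
        intro pq hpq
        rw [Finset.mem_filter] at hpq ⊢
        obtain ⟨-, ⟨hpd, hqd⟩, hstat⟩ := hpq
        have hub := isDyck_comb pq.1 pq.2 hm hpd hqd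
        have hfr := firstRet_comb pq.1 pq.2 hm hpd
        refine ⟨Finset.mem_univ _, ⟨⟨by omega, hub.2⟩, ?_⟩, hfr⟩
        rw [hcompat a ha' _ _ hpd hqd]
        exact hstat
      · -- left inverse
        intro s hs
        rw [Finset.mem_filter] at hs
        obtain ⟨-, ⟨⟨hd1, hd2⟩, hstat⟩, ⟨hr1, hr2⟩⟩ := hs
        exact (s_eq_comb s hm hd2 hr1).symm
      · -- right inverse
        intro pq hpq
        exact Prod.ext (decP_comb pq.1 pq.2 hm) (decQ_comb pq.1 pq.2 hm)
  · -- disjointness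
    intro x hx y hy hxy
    simp only [Finset.disjoint_left, Finset.mem_filter]
    rintro s ⟨-, -, h1⟩ ⟨-, -, h2⟩
    exact hxy (firstRet_unique s x y h1 h2)

/-! ### Base cases -/

lemma isDyck_zero (p : Fin (2*0) → Bool) : isDyck 0 p := by
  constructor
  · simp [upsTo]
  · intro k hk
    omega

lemma evenUps_zero (p : Fin (2*0) → Bool) : evenUps 0 p = 0 := by
  simp [evenUps]

lemma oddUps_zero (p : Fin (2*0) → Bool) : oddUps 0 p = 0 := by
  simp [oddUps]

lemma interiorPeaks_zero (p : Fin (2*0) → Bool) : interiorPeaks p = 0 := by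
  simp [interiorPeaks]

lemma card_univ_zero :
    ((Finset.univ : Finset (Fin (2*0) → Bool))).card = 1 := by
  simp [Finset.card_univ]

lemma Ec_zero (v : ℕ) : Ec 0 v = if v = 0 then 1 else 0 := by
  unfold Ec
  split
  · rename_i h
    subst h
    rw [Finset.filter_true_of_mem (fun p _ => ⟨isDyck_zero p, evenUps_zero p⟩)]
    exact card_univ_zero
  · rename_i h
    rw [Finset.filter_false_of_mem, Finset.card_empty]
    rintro p - ⟨-, h2⟩
    rw [evenUps_zero p] at h2
    omega

lemma Oc_zero (v : ℕ) : Oc 0 v = if v = 0 then 1 else 0 := by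
  unfold Oc
  split
  · rename_i h
    subst h
    rw [Finset.filter_true_of_mem (fun p _ => ⟨isDyck_zero p, oddUps_zero p⟩)]
    exact card_univ_zero
  · rename_i h
    rw [Finset.filter_false_of_mem, Finset.card_empty]
    rintro p - ⟨-, h2⟩
    rw [oddUps_zero p] at h2
    omega

lemma Ic_zero (v : ℕ) : Ic 0 v = if v = 0 then 1 else 0 := by
  unfold Ic
  split
  · rename_i h
    subst h
    rw [Finset.filter_true_of_mem (fun p _ => ⟨isDyck_zero p, interiorPeaks_zero p⟩)]
    exact card_univ_zero
  · rename_i h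
    rw [Finset.filter_false_of_mem, Finset.card_empty]
    rintro p - ⟨-, h2⟩
    rw [interiorPeaks_zero p] at h2
    omega

/-! ### Recurrences -/

lemma rec_E (n v : ℕ) :
    Ec (n+1) v = ∑ a ∈ Finset.range (n+1), ∑ j ∈ Finset.range (v+1),
      Oc a j * Ec (n-a) (v-j) := by
  exact recurrence_generic n v (fun s => evenUps (n+1) s) (fun a p => oddUps a p)
    (fun b q => evenUps b q) (fun a ha p0 q0 hp hq => by
      show evenUps (n+1) (comb (2*(n+1)) a (extS p0) (extS q0)) = oddUps a p0 + evenUps (n-a) q0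
      rw [evenUps_eq_cnt]
      exact evenUps_comb p0 q0 (by omega))

lemma card_oneplus (a j : ℕ) :
    ((Finset.univ : Finset (Fin (2*a) → Bool)).filter
      (fun p => isDyck a p ∧ 1 + evenUps a p = j)).card
    = if j = 0 then 0 else Ec a (j-1) := by
  split
  · rename_i h
    subst h
    rw [Finset.filter_false_of_mem, Finset.card_empty]
    rintro p - ⟨-, h2⟩
    omega
  · rename_i h
    unfold Ec
    congr 1
    apply Finset.filter_congr
    intro p _
    constructor
    · rintro ⟨h1, h2⟩; exact ⟨h1, by omega⟩
    · rintro ⟨h1, h2⟩; exact ⟨h1, by omega⟩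

lemma rec_O (n v : ℕ) :
    Oc (n+1) v = ∑ a ∈ Finset.range (n+1), ∑ j ∈ Finset.range (v+1),
      (if j = 0 then 0 else Ec a (j-1)) * Oc (n-a) (v-j) := by
  have h : Oc (n+1) v = ∑ a ∈ Finset.range (n+1), ∑ j ∈ Finset.range (v+1),
      ((Finset.univ : Finset (Fin (2*a) → Bool)).filter
        (fun p => isDyck a p ∧ 1 + evenUps a p = j)).card
      * ((Finset.univ : Finset (Fin (2*(n-a)) → Bool)).filter
        (fun q => isDyck (n-a) q ∧ oddUps (n-a) q = v - j)).card :=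
    recurrence_generic n v (fun s => oddUps (n+1) s) (fun a p => 1 + evenUps a p)
      (fun b q => oddUps b q) (fun a ha p0 q0 hp hq => by
        show oddUps (n+1) (comb (2*(n+1)) a (extS p0) (extS q0))
          = (1 + evenUps a p0) + oddUps (n-a) q0
        rw [oddUps_eq_cnt, oddUps_comb p0 q0 (by omega)])
  rw [h]
  apply Finset.sum_congr rfl
  intro a _
  apply Finset.sum_congr rfl
  intro j _
  rw [card_oneplus]
  rfl

lemma card_blockpeak (a j : ℕ) :
    ((Finset.univ : Finset (Fin (2*a) → Bool)).filter
      (fun p => isDyck a p ∧ (if a = 0 then 1 else interiorPeaks p) = j)).card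
    = if a = 0 then (if j = 1 then 1 else 0) else Ic a j := by
  by_cases ha : a = 0
  · subst ha
    rw [if_pos rfl]
    have hfc : ((Finset.univ : Finset (Fin (2*0) → Bool)).filter
          (fun p => isDyck 0 p ∧ (if (0:ℕ) = 0 then 1 else interiorPeaks p) = j))
        = ((Finset.univ : Finset (Fin (2*0) → Bool)).filter
          (fun p => isDyck 0 p ∧ 1 = j)) :=
      Finset.filter_congr (fun p _ => by simp)
    rw [hfc]
    split
    · rename_i h
      subst h
      rw [Finset.filter_true_of_mem (fun p _ => ⟨isDyck_zero p, rfl⟩)]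
      exact card_univ_zero
    · rename_i h
      rw [Finset.filter_false_of_mem, Finset.card_empty]
      rintro p - ⟨-, h2⟩
      omega
  · rw [if_neg ha]
    unfold Ic
    congr 1
    apply Finset.filter_congr
    intro p _
    rw [if_neg ha]

lemma rec_I (n v : ℕ) :
    Ic (n+1) v = ∑ a ∈ Finset.range (n+1), ∑ j ∈ Finset.range (v+1),
      (if a = 0 then (if j = 1 then 1 else 0) else Ic a j) * Ic (n-a) (v-j) := by
  have h : Ic (n+1) v = ∑ a ∈ Finset.range (n+1), ∑ j ∈ Finset.range (v+1),
      ((Finset.univ : Finset (Fin (2*a) → Bool)).filter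
        (fun p => isDyck a p ∧ (if a = 0 then 1 else interiorPeaks p) = j)).card
      * ((Finset.univ : Finset (Fin (2*(n-a)) → Bool)).filter
        (fun q => isDyck (n-a) q ∧ interiorPeaks q = v - j)).card :=
    recurrence_generic n v (fun s => interiorPeaks s)
      (fun a p => if a = 0 then 1 else interiorPeaks p)
      (fun b q => interiorPeaks q) (fun a ha p0 q0 hp hq => by
        show interiorPeaks (comb (2*(n+1)) a (extS p0) (extS q0))
          = (if a = 0 then 1 else interiorPeaks p0) + interiorPeaks q0
        rw [interiorPeaks_eq_cnt]
        exact peaks_comb p0 q0 (by omega) hp hq)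
  rw [h]
  apply Finset.sum_congr rfl
  intro a _
  apply Finset.sum_congr rfl
  intro j _
  rw [card_blockpeak]
  rfl

/-! ### The numeric induction -/

lemma Ic_stat_zero : ∀ n, Ic (n+1) 0 = 0 := by
  intro n
  induction n using Nat.strong_induction_on with
  | _ n ih =>
    rw [rec_I]
    apply Finset.sum_eq_zero
    intro a ha
    apply Finset.sum_eq_zero
    intro j hj
    rw [Finset.mem_range] at ha hj
    have hj0 : j = 0 := by omega
    subst hj0
    by_cases ha0 : a = 0
    · subst ha0
      simp
    · rw [if_neg ha0]
      obtain ⟨a', rfl⟩ : ∃ a', a = a' + 1 := ⟨a - 1, by omega⟩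
      rw [ih a' (by omega)]
      simp

lemma sum_delta_mul {w t : ℕ} (x : ℕ → ℕ) (ht : t < w) :
    (∑ j ∈ Finset.range w, (if j = t then 1 else 0) * x j) = x t := by
  rw [Finset.sum_eq_single t]
  · simp
  · intro b _ hb
    rw [if_neg hb, zero_mul]
  · intro hmem
    exact absurd (Finset.mem_range.mpr ht) hmem

lemma sum_delta_mul_right {w t : ℕ} (x : ℕ → ℕ) (ht : t < w) :
    (∑ j ∈ Finset.range w, x j * (if j = t then 1 else 0)) = x t := by
  rw [Finset.sum_eq_single t]
  · simp
  · intro b _ hb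
    rw [if_neg hb, mul_zero]
  · intro hmem
    exact absurd (Finset.mem_range.mpr ht) hmem

lemma IcZ : ∀ m, 1 ≤ m → Ic m 0 = 0 := by
  intro m hm
  obtain ⟨m', rfl⟩ : ∃ m', m = m' + 1 := ⟨m - 1, by omega⟩
  exact Ic_stat_zero m'

lemma main_key : ∀ n v, Ec (n+1) v = Ic (n+1) (v+1) ∧ Oc (n+1) v = Ic (n+1) v := by
  intro n
  induction n using Nat.strong_induction_on with
  | _ n ih =>
  intro v
  have OI : ∀ m, m ≤ n → ∀ k, Oc m k = Ic m k := by
    intro m hm k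
    match m with
    | 0 => rw [Oc_zero, Ic_zero]
    | m+1 => exact (ih m (by omega) k).2
  have EI : ∀ m, 1 ≤ m → m ≤ n → ∀ k, Ec m k = Ic m (k+1) := by
    intro m h1 h2 k
    obtain ⟨m', rfl⟩ : ∃ m', m = m' + 1 := ⟨m - 1, by omega⟩
    exact (ih m' (by omega) k).1
  constructor
  · -- Ec (n+1) v = Ic (n+1) (v+1)
    rw [rec_E, rec_I]
    by_cases hn0 : n = 0
    · subst hn0
      rw [Finset.sum_range_one, Finset.sum_range_one]
      have e1 : ∑ j ∈ Finset.range (v+1), Oc 0 j * Ec (0-0) (v-j)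
          = ∑ j ∈ Finset.range (v+1), (if j = 0 then 1 else 0) * Ec 0 (v-j) :=
        Finset.sum_congr rfl (fun j _ => by simp [Oc_zero])
      have e2 : ∑ j ∈ Finset.range (v+1+1),
            (if (0:ℕ) = 0 then (if j = 1 then 1 else 0) else Ic 0 j) * Ic (0-0) (v+1-j)
          = ∑ j ∈ Finset.range (v+2), (if j = 1 then 1 else 0) * Ic 0 (v+1-j) :=
        Finset.sum_congr rfl (fun j _ => by norm_num)
      rw [e1, e2, sum_delta_mul (fun j => Ec 0 (v-j)) (by omega),
        sum_delta_mul (fun j => Ic 0 (v+1-j)) (by omega)]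
      rw [Ec_zero, Ic_zero]
      norm_num
    · obtain ⟨n', rfl⟩ : ∃ n', n = n' + 1 := ⟨n - 1, by omega⟩
      conv_lhs => rw [Finset.sum_range_succ', Finset.sum_range_succ]
      conv_rhs => rw [Finset.sum_range_succ', Finset.sum_range_succ]
      have hmid : ∑ a ∈ Finset.range n',
            ∑ j ∈ Finset.range (v+1), Oc (a+1) j * Ec (n'+1-(a+1)) (v-j)
          = ∑ a ∈ Finset.range n',
            ∑ j ∈ Finset.range (v+1+1),
              (if a+1 = 0 then (if j = 1 then 1 else 0) else Ic (a+1) j)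
                * Ic (n'+1-(a+1)) (v+1-j) := by
        apply Finset.sum_congr rfl
        intro a ha
        rw [Finset.mem_range] at ha
        have h1 : ∑ j ∈ Finset.range (v+1), Oc (a+1) j * Ec (n'+1-(a+1)) (v-j)
            = ∑ j ∈ Finset.range (v+1), Ic (a+1) j * Ic (n'+1-(a+1)) (v-j+1) := by
          apply Finset.sum_congr rfl
          intro j hj
          rw [OI (a+1) (by omega), EI (n'+1-(a+1)) (by omega) (by omega)]
        have h2 : ∑ j ∈ Finset.range (v+1+1),
              (if a+1 = 0 then (if j = 1 then 1 else 0) else Ic (a+1) j)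
                * Ic (n'+1-(a+1)) (v+1-j)
            = ∑ j ∈ Finset.range (v+1), Ic (a+1) j * Ic (n'+1-(a+1)) (v-j+1) := by
          rw [Finset.sum_range_succ]
          have h3 : Ic (n'+1-(a+1)) (v+1-(v+1)) = 0 := by
            rw [Nat.sub_self]
            exact IcZ _ (by omega)
          rw [h3, mul_zero, add_zero]
          apply Finset.sum_congr rfl
          intro j hj
          rw [Finset.mem_range] at hj
          rw [if_neg (by omega : ¬ a+1 = 0), show v+1-j = v-j+1 by omega]
        rw [h1, h2]
      have hC : ∑ j ∈ Finset.range (v+1), Oc 0 j * Ec (n'+1-0) (v-j)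
          = Ic (n'+1) (v+1) := by
        have e1 : ∑ j ∈ Finset.range (v+1), Oc 0 j * Ec (n'+1-0) (v-j)
            = ∑ j ∈ Finset.range (v+1), (if j = 0 then 1 else 0) * Ec (n'+1) (v-j) :=
          Finset.sum_congr rfl (fun j _ => by simp [Oc_zero])
        rw [e1, sum_delta_mul (fun j => Ec (n'+1) (v-j)) (by omega)]
        exact EI (n'+1) (by omega) (by omega) v
      have hB : ∑ j ∈ Finset.range (v+1), Oc (n'+1) j * Ec (n'+1-(n'+1)) (v-j)
          = Ic (n'+1) v := by
        have e1 : ∑ j ∈ Finset.range (v+1), Oc (n'+1) j * Ec (n'+1-(n'+1)) (v-j)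
            = ∑ j ∈ Finset.range (v+1), Oc (n'+1) j * (if j = v then 1 else 0) := by
          apply Finset.sum_congr rfl
          intro j hj
          rw [Finset.mem_range] at hj
          rw [Nat.sub_self, Ec_zero]
          congr 1
          by_cases h : j = v
          · rw [if_pos h, if_pos (by omega)]
          · rw [if_neg h, if_neg (by omega)]
        rw [e1, sum_delta_mul_right (fun j => Oc (n'+1) j) (by omega)]
        exact OI (n'+1) (by omega) v
      have hC' : ∑ j ∈ Finset.range (v+1+1),
            (if (0:ℕ) = 0 then (if j = 1 then 1 else 0) else Ic 0 j) * Ic (n'+1-0) (v+1-j)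
          = Ic (n'+1) v := by
        have e1 : ∑ j ∈ Finset.range (v+1+1),
              (if (0:ℕ) = 0 then (if j = 1 then 1 else 0) else Ic 0 j) * Ic (n'+1-0) (v+1-j)
            = ∑ j ∈ Finset.range (v+2), (if j = 1 then 1 else 0) * Ic (n'+1) (v+1-j) :=
          Finset.sum_congr rfl (fun j _ => by simp)
        rw [e1, sum_delta_mul (fun j => Ic (n'+1) (v+1-j)) (by omega)]
        congr 1
      have hB' : ∑ j ∈ Finset.range (v+1+1),
            (if n'+1 = 0 then (if j = 1 then 1 else 0) else Ic (n'+1) j)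
              * Ic (n'+1-(n'+1)) (v+1-j)
          = Ic (n'+1) (v+1) := by
        have e1 : ∑ j ∈ Finset.range (v+1+1),
              (if n'+1 = 0 then (if j = 1 then 1 else 0) else Ic (n'+1) j)
                * Ic (n'+1-(n'+1)) (v+1-j)
            = ∑ j ∈ Finset.range (v+2), Ic (n'+1) j * (if j = v+1 then 1 else 0) := by
          apply Finset.sum_congr rfl
          intro j hj
          rw [Finset.mem_range] at hj
          rw [if_neg (by omega : ¬ n'+1 = 0), Nat.sub_self, Ic_zero]
          congr 1
          by_cases h : j = v+1
          · rw [if_pos (by omega), if_pos h]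
          · rw [if_neg (by omega), if_neg h]
        rw [e1, sum_delta_mul_right (fun j => Ic (n'+1) j) (by omega)]
      rw [hmid, hC, hB, hC', hB']
      omega
  · -- Oc (n+1) v = Ic (n+1) v
    rw [rec_O, rec_I]
    apply Finset.sum_congr rfl
    intro a ha
    rw [Finset.mem_range] at ha
    apply Finset.sum_congr rfl
    intro j hj
    rw [Finset.mem_range] at hj
    rw [OI (n-a) (by omega)]
    by_cases hj0 : j = 0
    · subst hj0
      rw [if_pos rfl, zero_mul]
      by_cases ha0 : a = 0
      · rw [if_pos ha0, if_neg (by omega), zero_mul]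
      · rw [if_neg ha0, IcZ a (by omega), zero_mul]
    · rw [if_neg hj0]
      by_cases ha0 : a = 0
      · subst ha0
        rw [if_pos rfl, Ec_zero]
        congr 1
        by_cases h1 : j = 1
        · rw [if_pos (by omega), if_pos h1]
        · rw [if_neg (by omega), if_neg h1]
      · rw [if_neg ha0, EI a (by omega) (by omega), show j-1+1 = j by omega]

lemma final (n v : ℕ) (hn : 1 ≤ n) : Ec n v = Ic n (v+1) := by
  obtain ⟨n', rfl⟩ : ∃ n', n = n' + 1 := ⟨n - 1, by omega⟩
  exact (main_key n' v).1

end Stmt15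

theorem stmt15 (n v : ℕ) (hn : 1 ≤ n) (hv : v ≤ n - 1) :
    ((Finset.univ : Finset (Fin (2*n) → Bool)).filter
        (fun s => isDyck n s ∧ evenUps n s = v)).card
      = ((Finset.univ : Finset (Fin (2*n) → Bool)).filter
        (fun s => isDyck n s ∧ interiorPeaks s = v + 1)).card := by
  exact Stmt15.final n v hn
end

section
/- For each n ≥ 1 and 0 ≤ v ≤ n-1, the number of bilateral Dyck paths of length 2n with exactly v up-steps at even positions equals the number of bilateral Dyck paths of length 2n with exactly v+1 peaks (counting the initial vertex as a peak when the first step is down and the final vertex as a peak when the last step is up). -/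
open Finset
open scoped Classical

-- chunk1 lemmas
lemma extS_lt {m : ℕ} (s : Fin m → Bool) {j : ℕ} (h : j < m) : extS s j = s ⟨j, h⟩ := by
  simp [extS, h]

lemma extS_snoc_lt {m : ℕ} (t : Fin m → Bool) (b : Bool) {j : ℕ} (h : j < m) :
    extS (Fin.snoc t b) j = extS t j := by
  have h' : j < m + 1 := by omega
  rw [extS_lt _ h', extS_lt _ h]
  have : (⟨j, h'⟩ : Fin (m+1)) = Fin.castSucc ⟨j, h⟩ := rfl
  rw [this, Fin.snoc_castSucc]

lemma extS_snoc_last {m : ℕ} (t : Fin m → Bool) (b : Bool) :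
    extS (Fin.snoc t b) m = b := by
  rw [extS_lt _ (Nat.lt_succ_self m)]
  have : (⟨m, Nat.lt_succ_self m⟩ : Fin (m+1)) = Fin.last m := rfl
  rw [this, Fin.snoc_last]

lemma upsTo_congr {m m' : ℕ} (s : Fin m → Bool) (t : Fin m' → Bool) (k : ℕ)
    (h : ∀ j < k, extS s j = extS t j) : upsTo s k = upsTo t k := by
  unfold upsTo
  congr 1
  apply Finset.filter_congr
  intro j hj
  rw [h j (Finset.mem_range.mp hj)]

lemma upsTo_snoc {m : ℕ} (t : Fin m → Bool) (b : Bool) :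
    upsTo (Fin.snoc t b) (m+1) = upsTo t m + (if b = true then 1 else 0) := by
  unfold upsTo
  rw [Finset.range_add_one, Finset.filter_insert]
  have h1 : ((Finset.range m).filter (fun j => extS (Fin.snoc t b) j = true)).card
      = ((Finset.range m).filter (fun j => extS t j = true)).card := by
    congr 1
    apply Finset.filter_congr
    intro j hj
    rw [extS_snoc_lt t b (Finset.mem_range.mp hj)]
  rw [extS_snoc_last]
  split_ifs with hb
  · rw [Finset.card_insert_of_notMem (by simp)]
    omega
  · omega

lemma interiorPeaks_snoc {m : ℕ} (hm : 1 ≤ m) (t : Fin m → Bool) (b : Bool) :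
    interiorPeaks (Fin.snoc t b) = interiorPeaks t
      + (if extS t (m-1) = true ∧ b = false then 1 else 0) := by
  obtain ⟨m', rfl⟩ : ∃ m', m = m' + 1 := ⟨m - 1, by omega⟩
  unfold interiorPeaks
  simp only [Nat.add_sub_cancel]
  rw [Finset.range_add_one, Finset.filter_insert]
  have h1 : ((Finset.range m').filter
        (fun j => extS (Fin.snoc t b) j = true ∧ extS (Fin.snoc t b) (j+1) = false)).card
      = ((Finset.range m').filter (fun j => extS t j = true ∧ extS t (j+1) = false)).card := by
    congr 1
    apply Finset.filter_congr
    intro j hj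
    have hj' := Finset.mem_range.mp hj
    rw [extS_snoc_lt t b (by omega), extS_snoc_lt t b (by omega)]
  rw [extS_snoc_lt t b (by omega), extS_snoc_last]
  split_ifs with hc
  · rw [Finset.card_insert_of_notMem (by simp)]
    omega
  · omega

-- pk : peaks not counting the final-boundary peak
def pk {m : ℕ} (s : Fin m → Bool) : ℕ :=
  interiorPeaks s + (if extS s 0 = false then 1 else 0)

lemma pk_snoc {m : ℕ} (hm : 1 ≤ m) (t : Fin m → Bool) (b : Bool) :
    pk (Fin.snoc t b) = pk t + (if extS t (m-1) = true ∧ b = false then 1 else 0) := by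
  unfold pk
  rw [interiorPeaks_snoc hm, extS_snoc_lt t b (by omega)]
  omega

noncomputable def cntP1 (m u k : ℕ) : ℕ :=
  ((Finset.univ : Finset (Fin m → Bool)).filter
    (fun s => upsTo s m = u ∧ pk s = k ∧ extS s (m-1) = true)).card

noncomputable def cntP0 (m u k : ℕ) : ℕ :=
  ((Finset.univ : Finset (Fin m → Bool)).filter
    (fun s => upsTo s m = u ∧ pk s = k ∧ extS s (m-1) = false)).card

lemma upsTo_le {m : ℕ} (s : Fin m → Bool) (k : ℕ) : upsTo s k ≤ k := by
  unfold upsTo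
  calc _ ≤ (Finset.range k).card := Finset.card_filter_le _ _
  _ = k := Finset.card_range k

lemma allTrue {m : ℕ} (s : Fin m → Bool) (h : upsTo s m = m) :
    ∀ j < m, extS s j = true := by
  intro j hj
  unfold upsTo at h
  have hsub : (Finset.range m).filter (fun j => extS s j = true) = Finset.range m := by
    apply Finset.eq_of_subset_of_card_le (Finset.filter_subset _ _)
    rw [h, Finset.card_range]
  have : j ∈ (Finset.range m).filter (fun j => extS s j = true) := by
    rw [hsub]; exact Finset.mem_range.mpr hj
  exact (Finset.mem_filter.mp this).2

lemma allFalse {m : ℕ} (s : Fin m → Bool) (h : upsTo s m = 0) :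
    ∀ j < m, extS s j = false := by
  intro j hj
  unfold upsTo at h
  rw [Finset.card_eq_zero] at h
  by_contra hb
  have : j ∈ (Finset.range m).filter (fun j => extS s j = true) := by
    refine Finset.mem_filter.mpr ⟨Finset.mem_range.mpr hj, ?_⟩
    revert hb; cases extS s j <;> simp
  rw [h] at this
  exact absurd this (Finset.notMem_empty j)

-- words ending in an up-step have at least one up
lemma cntP1_zero {m : ℕ} (hm : 1 ≤ m) (k : ℕ) : cntP1 m 0 k = 0 := by
  unfold cntP1
  rw [Finset.card_eq_zero, Finset.filter_eq_empty_iff]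
  rintro s - ⟨h1, -, h3⟩
  have := allFalse s h1 (m-1) (by omega)
  rw [this] at h3
  exact absurd h3 (by simp)

-- all-up words
lemma cntP1_full_zero {m : ℕ} (hm : 1 ≤ m) : cntP1 m m 0 = 1 := by
  unfold cntP1
  rw [Finset.card_eq_one]
  refine ⟨fun _ => true, ?_⟩
  ext s
  simp only [Finset.mem_filter, Finset.mem_univ, true_and, Finset.mem_singleton]
  constructor
  · rintro ⟨h1, -, -⟩
    funext i
    have := allTrue s h1 i.val i.isLt
    rw [extS_lt s i.isLt] at this
    simpa using this
  · rintro rfl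
    have hups : upsTo (fun _ => true : Fin m → Bool) m = m := by
      unfold upsTo
      rw [Finset.filter_true_of_mem, Finset.card_range]
      intro j hj
      rw [extS_lt _ (Finset.mem_range.mp hj)]
    refine ⟨hups, ?_, by rw [extS_lt _ (by omega : m - 1 < m)]⟩
    unfold pk interiorPeaks
    rw [extS_lt _ (by omega : 0 < m)]
    simp only [if_neg (by simp : ¬ ((true:Bool) = false))]
    rw [Finset.card_eq_zero.mpr, Nat.add_zero]
    rw [Finset.filter_eq_empty_iff]
    intro j hj
    have hj' := Finset.mem_range.mp hj
    rw [extS_lt _ (by omega : j + 1 < m)]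
    simp

lemma cntP1_full_pos {m k : ℕ} (hm : 1 ≤ m) : cntP1 m m (k+1) = 0 := by
  unfold cntP1
  rw [Finset.card_eq_zero, Finset.filter_eq_empty_iff]
  rintro s - ⟨h1, h2, -⟩
  have hall := allTrue s h1
  have hpk : pk s = 0 := by
    unfold pk interiorPeaks
    rw [hall 0 (by omega)]
    simp only [if_neg (by simp : ¬ ((true:Bool) = false))]
    rw [Finset.card_eq_zero.mpr, Nat.add_zero]
    rw [Finset.filter_eq_empty_iff]
    intro j hj
    have hj' := Finset.mem_range.mp hj
    rw [hall (j+1) (by omega)]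
    simp
  omega

lemma cntP0_full {m k : ℕ} (hm : 1 ≤ m) : cntP0 m m k = 0 := by
  unfold cntP0
  rw [Finset.card_eq_zero, Finset.filter_eq_empty_iff]
  rintro s - ⟨h1, -, h3⟩
  have := allTrue s h1 (m-1) (by omega)
  rw [this] at h3
  exact absurd h3 (by simp)

-- all-down words: pk is exactly 1
lemma cntP0_zero {m k : ℕ} (hm : 1 ≤ m) : cntP0 m 0 k = if k = 1 then 1 else 0 := by
  unfold cntP0
  have hups : upsTo (fun _ => false : Fin m → Bool) m = 0 := by
    unfold upsTo
    rw [Finset.card_eq_zero, Finset.filter_eq_empty_iff]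
    intro j hj
    rw [extS_lt _ (Finset.mem_range.mp hj)]
    simp
  have hip : interiorPeaks (fun _ => false : Fin m → Bool) = 0 := by
    unfold interiorPeaks
    rw [Finset.card_eq_zero, Finset.filter_eq_empty_iff]
    intro j hj
    have hj' := Finset.mem_range.mp hj
    rw [extS_lt _ (by omega : j < m)]
    simp
  have hpk : pk (fun _ => false : Fin m → Bool) = 1 := by
    unfold pk
    rw [hip, extS_lt _ (by omega : 0 < m)]
    simp
  split_ifs with hk
  · subst hk
    rw [Finset.card_eq_one]
    refine ⟨fun _ => false, ?_⟩
    ext s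
    simp only [Finset.mem_filter, Finset.mem_univ, true_and, Finset.mem_singleton]
    constructor
    · rintro ⟨h1, -, -⟩
      funext i
      have := allFalse s h1 i.val i.isLt
      rw [extS_lt s i.isLt] at this
      simpa using this
    · rintro rfl
      exact ⟨hups, hpk, by rw [extS_lt _ (by omega : m - 1 < m)]⟩
  · rw [Finset.card_eq_zero, Finset.filter_eq_empty_iff]
    rintro s - ⟨h1, h2, -⟩
    have : s = (fun _ => false) := by
      funext i
      have := allFalse s h1 i.val i.isLt
      rw [extS_lt s i.isLt] at this
      simpa using this
    rw [this, hpk] at h2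
    exact hk h2.symm
lemma cardCongr {α : Type*} [Fintype α] {p q : α → Prop}
    [DecidablePred p] [DecidablePred q] (h : ∀ s, p s ↔ q s) :
    ((Finset.univ : Finset α).filter p).card = ((Finset.univ : Finset α).filter q).card := by
  have e : (Finset.univ : Finset α).filter p = (Finset.univ : Finset α).filter q := by
    ext s
    simp only [Finset.mem_filter, Finset.mem_univ, true_and]
    exact h s
  rw [e]

lemma extS_last_eq {m : ℕ} (s : Fin (m+1) → Bool) : extS s m = s (Fin.last m) := by
  rw [extS_lt s (Nat.lt_succ_self m)]
  rfl

-- removing the final step (an up-step)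
lemma key1 {m : ℕ} (hm : 1 ≤ m) (u k : ℕ) :
    cntP1 (m+1) (u+1) k = ((Finset.univ : Finset (Fin m → Bool)).filter
      (fun t => upsTo t m = u ∧ pk t = k)).card := by
  unfold cntP1
  apply Finset.card_bij' (i := fun (s : Fin (m+1) → Bool) _ => Fin.init s)
    (j := fun (t : Fin m → Bool) _ => Fin.snoc t true)
  · intro s hs
    simp only [Finset.mem_filter, Finset.mem_univ, true_and] at hs ⊢
    obtain ⟨h1, h2, h3⟩ := hs
    have hb : s (Fin.last m) = true := by
      rw [← extS_last_eq s]; simpa using h3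
    have hs' : s = Fin.snoc (Fin.init s) true := by
      conv_lhs => rw [← Fin.snoc_init_self s]
      rw [hb]
    rw [hs'] at h1 h2
    rw [upsTo_snoc] at h1
    rw [pk_snoc hm] at h2
    rw [if_pos rfl] at h1
    rw [if_neg (by simp)] at h2
    omega
  · intro t ht
    simp only [Finset.mem_filter, Finset.mem_univ, true_and] at ht ⊢
    obtain ⟨h1, h2⟩ := ht
    refine ⟨?_, ?_, ?_⟩
    · rw [upsTo_snoc, h1]; simp
    · rw [pk_snoc hm, h2, if_neg (by simp)]
      omega
    · have : extS (Fin.snoc t true) ((m+1)-1) = extS (Fin.snoc t true) m := by norm_num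
      rw [this, extS_snoc_last]
  · intro s hs
    simp only [Finset.mem_filter, Finset.mem_univ, true_and] at hs
    have hb : s (Fin.last m) = true := by
      rw [← extS_last_eq s]; simpa using hs.2.2
    conv_rhs => rw [← Fin.snoc_init_self s]
    rw [hb]
  · intro t _
    exact Fin.init_snoc (α := fun _ : Fin (m+1) => Bool) true t

-- removing the final step (a down-step)
lemma key0 {m : ℕ} (hm : 1 ≤ m) (u K : ℕ) :
    cntP0 (m+1) u K = ((Finset.univ : Finset (Fin m → Bool)).filter
      (fun t => upsTo t m = u ∧ pk t + (if extS t (m-1) = true then 1 else 0) = K)).card := by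
  unfold cntP0
  apply Finset.card_bij' (i := fun (s : Fin (m+1) → Bool) _ => Fin.init s)
    (j := fun (t : Fin m → Bool) _ => Fin.snoc t false)
  · intro s hs
    simp only [Finset.mem_filter, Finset.mem_univ, true_and] at hs ⊢
    obtain ⟨h1, h2, h3⟩ := hs
    have hb : s (Fin.last m) = false := by
      rw [← extS_last_eq s]; simpa using h3
    have hs' : s = Fin.snoc (Fin.init s) false := by
      conv_lhs => rw [← Fin.snoc_init_self s]
      rw [hb]
    rw [hs'] at h1 h2
    rw [upsTo_snoc] at h1
    rw [pk_snoc hm] at h2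
    rw [if_neg (by simp : ¬ ((false:Bool) = true))] at h1
    refine ⟨by omega, ?_⟩
    rw [← h2]
    by_cases hc : extS (Fin.init s) (m-1) = true
    · rw [if_pos hc, if_pos ⟨hc, rfl⟩]
    · rw [if_neg hc, if_neg (fun h => hc h.1)]
  · intro t ht
    simp only [Finset.mem_filter, Finset.mem_univ, true_and] at ht ⊢
    obtain ⟨h1, h2⟩ := ht
    refine ⟨?_, ?_, ?_⟩
    · rw [upsTo_snoc, h1]; simp
    · rw [pk_snoc hm, ← h2]
      by_cases hc : extS t (m-1) = true
      · rw [if_pos hc, if_pos ⟨hc, rfl⟩]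
      · rw [if_neg hc, if_neg (fun h => hc h.1)]
    · have : extS (Fin.snoc t false) ((m+1)-1) = extS (Fin.snoc t false) m := by norm_num
      rw [this, extS_snoc_last]
  · intro s hs
    simp only [Finset.mem_filter, Finset.mem_univ, true_and] at hs
    have hb : s (Fin.last m) = false := by
      rw [← extS_last_eq s]; simpa using hs.2.2
    conv_rhs => rw [← Fin.snoc_init_self s]
    rw [hb]
  · intro t _
    exact Fin.init_snoc (α := fun _ : Fin (m+1) => Bool) false t

lemma rec1 {m : ℕ} (hm : 1 ≤ m) (u k : ℕ) :
    cntP1 (m+1) (u+1) k = cntP1 m u k + cntP0 m u k := by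
  rw [key1 hm u k]
  have hsplit := Finset.card_filter_add_card_filter_not
    (s := (Finset.univ : Finset (Fin m → Bool)).filter (fun t => upsTo t m = u ∧ pk t = k))
    (p := fun t => extS t (m-1) = true)
  simp only [Finset.filter_filter, Bool.not_eq_true, and_assoc,
    Finset.filter_congr_decidable] at hsplit
  unfold cntP1 cntP0
  omega

lemma rec0succ {m : ℕ} (hm : 1 ≤ m) (u k : ℕ) :
    cntP0 (m+1) u (k+1) = cntP1 m u k + cntP0 m u (k+1) := by
  rw [key0 hm u (k+1)]
  have hsplit := Finset.card_filter_add_card_filter_not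
    (s := (Finset.univ : Finset (Fin m → Bool)).filter
      (fun t => upsTo t m = u ∧ pk t + (if extS t (m-1) = true then 1 else 0) = k+1))
    (p := fun t => extS t (m-1) = true)
  simp only [Finset.filter_filter, Bool.not_eq_true, and_assoc,
    Finset.filter_congr_decidable] at hsplit
  have e1 : ((Finset.univ : Finset (Fin m → Bool)).filter
      (fun t => upsTo t m = u ∧ (pk t + (if extS t (m-1) = true then 1 else 0) = k+1) ∧
        extS t (m-1) = true)).card = cntP1 m u k := by
    unfold cntP1
    apply cardCongr
    intro t
    by_cases hc : extS t (m-1) = true <;> simp [hc] <;> omega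
  have e0 : ((Finset.univ : Finset (Fin m → Bool)).filter
      (fun t => upsTo t m = u ∧ (pk t + (if extS t (m-1) = true then 1 else 0) = k+1) ∧
        extS t (m-1) = false)).card = cntP0 m u (k+1) := by
    unfold cntP0
    apply cardCongr
    intro t
    by_cases hc : extS t (m-1) = true
    · simp [hc]
    · simp only [Bool.not_eq_true] at hc
      simp [hc]
  omega

lemma rec0zero {m : ℕ} (hm : 1 ≤ m) (u : ℕ) :
    cntP0 (m+1) u 0 = cntP0 m u 0 := by
  rw [key0 hm u 0]
  unfold cntP0
  apply cardCongr
  intro t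
  by_cases hc : extS t (m-1) = true
  · simp [hc]
  · simp only [Bool.not_eq_true] at hc
    simp [hc]
lemma mixed (N : ℕ) : ∀ u d k, u + d ≤ N →
    cntP1 (u+d+1) u 0 = 0 ∧ cntP0 (u+d+1) u 0 = 0 ∧
    cntP1 (u+d+1) u (k+1) = Nat.choose u (k+1) * Nat.choose d k ∧
    cntP0 (u+d+1) u (k+1) = Nat.choose u k * Nat.choose d k := by
  induction N with
  | zero =>
    intro u d k h
    obtain rfl : u = 0 := by omega
    obtain rfl : d = 0 := by omega
    refine ⟨cntP1_zero (by omega) 0, ?_, ?_, ?_⟩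
    · rw [cntP0_zero (by omega)]; simp
    · rw [cntP1_zero (by omega)]; simp
    · rw [cntP0_zero (by omega)]
      cases k with
      | zero => simp
      | succ k' => simp
  | succ N ih =>
    intro u d k h
    by_cases hle : u + d ≤ N
    · exact ih u d k hle
    have hud : u + d = N + 1 := by omega
    rcases u with _ | u'
    · -- u = 0
      refine ⟨cntP1_zero (by omega) 0, ?_, ?_, ?_⟩
      · rw [cntP0_zero (by omega)]; simp
      · rw [cntP1_zero (by omega)]; simp
      · rw [cntP0_zero (by omega)]
        cases k with
        | zero => simp
        | succ k' => simp
    · -- u = u' + 1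
      have hu'd : u' + d ≤ N := by omega
      have e : u'+1+d+1 = (u'+d+1)+1 := by omega
      have P1_0 : cntP1 (u'+1+d+1) (u'+1) 0 = 0 := by
        rw [e, rec1 (by omega) u' 0]
        obtain ⟨a, b, -, -⟩ := ih u' d 0 hu'd
        omega
      have P1_succ : cntP1 (u'+1+d+1) (u'+1) (k+1)
          = Nat.choose (u'+1) (k+1) * Nat.choose d k := by
        rw [e, rec1 (by omega) u' (k+1)]
        obtain ⟨-, -, c, dd⟩ := ih u' d k hu'd
        rw [c, dd, Nat.choose_succ_succ]
        ring
      rcases d with _ | d'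
      · -- d = 0
        have e0 : u'+1+0+1 = (u'+1)+1 := by omega
        have P0_0 : cntP0 (u'+1+0+1) (u'+1) 0 = 0 := by
          rw [e0, rec0zero (by omega) (u'+1), cntP0_full (by omega)]
        have P0_succ : cntP0 (u'+1+0+1) (u'+1) (k+1)
            = Nat.choose (u'+1) k * Nat.choose 0 k := by
          rw [e0, rec0succ (by omega) (u'+1) k]
          cases k with
          | zero =>
            rw [cntP1_full_zero (by omega), cntP0_full (by omega)]
            simp
          | succ k' =>
            rw [cntP1_full_pos (by omega), cntP0_full (by omega)]
            simp [Nat.choose_zero_succ]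
        exact ⟨P1_0, P0_0, P1_succ, P0_succ⟩
      · -- d = d' + 1
        have hsum : u'+1+d' ≤ N := by omega
        have e0 : u'+1+(d'+1)+1 = (u'+1+d'+1)+1 := by omega
        have P0_0 : cntP0 (u'+1+(d'+1)+1) (u'+1) 0 = 0 := by
          rw [e0, rec0zero (by omega) (u'+1)]
          obtain ⟨-, b, -, -⟩ := ih (u'+1) d' 0 hsum
          exact b
        have P0_succ : cntP0 (u'+1+(d'+1)+1) (u'+1) (k+1)
            = Nat.choose (u'+1) k * Nat.choose (d'+1) k := by
          rw [e0, rec0succ (by omega) (u'+1) k]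
          cases k with
          | zero =>
            obtain ⟨a, -, -, dd⟩ := ih (u'+1) d' 0 hsum
            rw [a, dd]
            simp
          | succ k' =>
            obtain ⟨-, -, c, -⟩ := ih (u'+1) d' k' hsum
            obtain ⟨-, -, -, dd2⟩ := ih (u'+1) d' (k'+1) hsum
            rw [c, dd2, Nat.choose_succ_succ d' k']
            ring
        exact ⟨P1_0, P0_0, P1_succ, P0_succ⟩
lemma sideB_split (n v : ℕ) (hn : 1 ≤ n) :
    ((Finset.univ : Finset (Fin (2*n) → Bool)).filter
        (fun s => isBilateral n s ∧ bPeaks n s = v + 1)).card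
      = cntP1 (2*n) n v + cntP0 (2*n) n (v+1) := by
  have hsplit := Finset.card_filter_add_card_filter_not
    (s := (Finset.univ : Finset (Fin (2*n) → Bool)).filter
        (fun s => isBilateral n s ∧ bPeaks n s = v + 1))
    (p := fun s => extS s (2*n-1) = true)
  simp only [Finset.filter_filter, Bool.not_eq_true,
    Finset.filter_congr_decidable] at hsplit
  have e1 : ((Finset.univ : Finset (Fin (2*n) → Bool)).filter
      (fun s => (isBilateral n s ∧ bPeaks n s = v + 1) ∧ extS s (2*n-1) = true)).card
      = cntP1 (2*n) n v := by
    unfold cntP1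
    apply cardCongr
    intro s
    unfold isBilateral bPeaks pk
    by_cases hc : extS s (2*n-1) = true
    · simp [hc]
    · have hc' : extS s (2*n-1) = false := by
        revert hc; cases extS s (2*n-1) <;> simp
      simp [hc']
  have e0 : ((Finset.univ : Finset (Fin (2*n) → Bool)).filter
      (fun s => (isBilateral n s ∧ bPeaks n s = v + 1) ∧ extS s (2*n-1) = false)).card
      = cntP0 (2*n) n (v+1) := by
    unfold cntP0
    apply cardCongr
    intro s
    unfold isBilateral bPeaks pk
    by_cases hc : extS s (2*n-1) = true
    · simp [hc]
    · have hc' : extS s (2*n-1) = false := by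
        revert hc; cases extS s (2*n-1) <;> simp
      simp [hc']
  omega

lemma sideB_value (n v : ℕ) (hn : 1 ≤ n) (hv : v ≤ n - 1) :
    cntP1 (2*n) n v + cntP0 (2*n) n (v+1) = n.choose v * n.choose v := by
  have e : 2*n = n + (n-1) + 1 := by omega
  rw [e]
  cases v with
  | zero =>
    obtain ⟨h1, -, -, h4⟩ := mixed (n + (n-1)) n (n-1) 0 (le_refl _)
    rw [h1, h4]
    simp
  | succ v' =>
    obtain ⟨-, -, h3, -⟩ := mixed (n + (n-1)) n (n-1) v' (le_refl _)
    obtain ⟨-, -, -, h4⟩ := mixed (n + (n-1)) n (n-1) (v'+1) (le_refl _)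
    rw [h3, h4]
    have hps := Nat.choose_succ_succ (n-1) v'
    simp only [Nat.succ_eq_add_one] at hps
    rw [show n-1+1 = n from by omega] at hps
    rw [hps]
    ring
lemma cardCongr' {α : Type*} {s : Finset α} {p q : α → Prop}
    [DecidablePred p] [DecidablePred q] (h : ∀ x ∈ s, p x ↔ q x) :
    (s.filter p).card = (s.filter q).card := by
  have e : s.filter p = s.filter q := by
    ext x
    simp only [Finset.mem_filter]
    constructor
    · rintro ⟨hx, hp⟩; exact ⟨hx, (h x hx).mp hp⟩
    · rintro ⟨hx, hq⟩; exact ⟨hx, (h x hx).mpr hq⟩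
  rw [e]

noncomputable def onesF {n : ℕ} (f : Fin n → Bool) : ℕ :=
  ((Finset.univ : Finset (Fin n)).filter (fun i => f i = true)).card

lemma count_ones (n v : ℕ) :
    ((Finset.univ : Finset (Fin n → Bool)).filter (fun f => onesF f = v)).card
      = n.choose v := by
  rw [show n.choose v = ((Finset.univ : Finset (Fin n)).card).choose v from by
    rw [Finset.card_univ, Fintype.card_fin]]
  rw [← Finset.card_powersetCard]
  apply Finset.card_bij' (i := fun f _ => (Finset.univ : Finset (Fin n)).filter (fun i => f i = true))
    (j := fun S _ => fun i => decide (i ∈ S))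
  · intro f hf
    simp only [Finset.mem_filter, Finset.mem_univ, true_and] at hf
    rw [Finset.mem_powersetCard]
    exact ⟨Finset.filter_subset _ _, hf⟩
  · intro S hS
    simp only [Finset.mem_filter, Finset.mem_univ, true_and]
    rw [Finset.mem_powersetCard] at hS
    unfold onesF
    rw [← hS.2]
    congr 1
    ext i
    simp
  · intro f _
    funext i
    by_cases h : f i = true
    · simp [h]
    · simp only [Bool.not_eq_true] at h
      simp [h]
  · intro S _
    ext i
    simp

lemma evenUps_eq {n : ℕ} (s : Fin (2*n) → Bool) :
    evenUps n s = onesF (fun i : Fin n => extS s (2*(i:ℕ)+1)) := by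
  unfold evenUps onesF
  apply Finset.card_bij' (i := fun j hj => (⟨j/2, by
      simp only [Finset.mem_filter, Finset.mem_range] at hj; omega⟩ : Fin n))
    (j := fun i _ => 2*(i:ℕ)+1)
  · intro j hj
    simp only [Finset.mem_filter, Finset.mem_range] at hj ⊢
    refine ⟨Finset.mem_univ _, ?_⟩
    show extS s (2*(j/2)+1) = true
    have : 2*(j/2)+1 = j := by omega
    rw [this]
    exact hj.2.2
  · intro j hj
    simp only [Finset.mem_filter, Finset.mem_range] at hj
    show 2*(j/2)+1 = j
    omega
  · intro i _
    apply Fin.ext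
    show (2*(i:ℕ)+1)/2 = (i:ℕ)
    omega
  · intro i hi
    simp only [Finset.mem_filter, Finset.mem_univ, true_and] at hi
    refine Finset.mem_filter.mpr ⟨Finset.mem_range.mpr ?_, ?_, hi⟩
    · have := i.isLt; omega
    · omega

lemma oddUps_eq {n : ℕ} (s : Fin (2*n) → Bool) :
    (((Finset.range (2*n)).filter (fun j => extS s j = true ∧ ¬ j % 2 = 1)).card)
      = onesF (fun i : Fin n => extS s (2*(i:ℕ))) := by
  unfold onesF
  apply Finset.card_bij' (i := fun j hj => (⟨j/2, by
      simp only [Finset.mem_filter, Finset.mem_range] at hj; omega⟩ : Fin n))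
    (j := fun i _ => 2*(i:ℕ))
  · intro j hj
    simp only [Finset.mem_filter, Finset.mem_range] at hj ⊢
    refine ⟨Finset.mem_univ _, ?_⟩
    show extS s (2*(j/2)) = true
    have : 2*(j/2) = j := by omega
    rw [this]
    exact hj.2.1
  · intro j hj
    simp only [Finset.mem_filter, Finset.mem_range] at hj
    show 2*(j/2) = j
    omega
  · intro i _
    apply Fin.ext
    show (2*(i:ℕ))/2 = (i:ℕ)
    omega
  · intro i hi
    simp only [Finset.mem_filter, Finset.mem_univ, true_and] at hi
    refine Finset.mem_filter.mpr ⟨Finset.mem_range.mpr ?_, hi, ?_⟩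
    · have := i.isLt; omega
    · omega

lemma total_eq {n : ℕ} (s : Fin (2*n) → Bool) :
    upsTo s (2*n) = onesF (fun i : Fin n => extS s (2*(i:ℕ)+1))
      + onesF (fun i : Fin n => extS s (2*(i:ℕ))) := by
  have hsplit := Finset.card_filter_add_card_filter_not
    (s := (Finset.range (2*n)).filter (fun j => extS s j = true))
    (p := fun j => j % 2 = 1)
  simp only [Finset.filter_filter, Finset.filter_congr_decidable] at hsplit
  have e1 : ((Finset.range (2*n)).filter (fun j => extS s j = true ∧ j % 2 = 1)).card
      = evenUps n s := by
    unfold evenUps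
    apply cardCongr'
    intro j _
    tauto
  rw [evenUps_eq] at e1
  rw [← oddUps_eq (s := s)]
  unfold upsTo
  omega

def recomb {n : ℕ} (p : (Fin n → Bool) × (Fin n → Bool)) : Fin (2*n) → Bool :=
  fun j => if (j:ℕ) % 2 = 1 then p.1 ⟨(j:ℕ)/2, by have := j.isLt; omega⟩
    else p.2 ⟨(j:ℕ)/2, by have := j.isLt; omega⟩

lemma recomb_odd {n : ℕ} (p : (Fin n → Bool) × (Fin n → Bool)) (i : Fin n) :
    extS (recomb p) (2*(i:ℕ)+1) = p.1 i := by
  rw [extS_lt _ (by have := i.isLt; omega : 2*(i:ℕ)+1 < 2*n)]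
  show (if (2*(i:ℕ)+1) % 2 = 1 then _ else _) = p.1 i
  rw [if_pos (by omega)]
  exact congrArg p.1 (Fin.ext (by simpa using (by omega : (2*(i:ℕ)+1)/2 = (i:ℕ))))

lemma recomb_even {n : ℕ} (p : (Fin n → Bool) × (Fin n → Bool)) (i : Fin n) :
    extS (recomb p) (2*(i:ℕ)) = p.2 i := by
  rw [extS_lt _ (by have := i.isLt; omega : 2*(i:ℕ) < 2*n)]
  show (if (2*(i:ℕ)) % 2 = 1 then _ else _) = p.2 i
  rw [if_neg (by omega)]
  exact congrArg p.2 (Fin.ext (by simpa using (by omega : (2*(i:ℕ))/2 = (i:ℕ))))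

lemma sideA (n v : ℕ) (hv : v ≤ n) :
    ((Finset.univ : Finset (Fin (2*n) → Bool)).filter
        (fun s => isBilateral n s ∧ evenUps n s = v)).card
      = n.choose v * n.choose (n-v) := by
  have step1 : ((Finset.univ : Finset (Fin (2*n) → Bool)).filter
        (fun s => isBilateral n s ∧ evenUps n s = v)).card
      = ((Finset.univ : Finset ((Fin n → Bool) × (Fin n → Bool))).filter
        (fun p => onesF p.1 = v ∧ onesF p.1 + onesF p.2 = n)).card := by
    apply Finset.card_bij'
      (i := fun s _ => ((fun i : Fin n => extS s (2*(i:ℕ)+1)), (fun i : Fin n => extS s (2*(i:ℕ)))))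
      (j := fun p _ => recomb p)
    · intro s hs
      simp only [Finset.mem_filter, Finset.mem_univ, true_and] at hs ⊢
      obtain ⟨h1, h2⟩ := hs
      unfold isBilateral at h1
      rw [evenUps_eq] at h2
      rw [total_eq] at h1
      exact ⟨h2, h1⟩
    · intro p hp
      simp only [Finset.mem_filter, Finset.mem_univ, true_and] at hp ⊢
      obtain ⟨h1, h2⟩ := hp
      have ho : (fun i : Fin n => extS (recomb p) (2*(i:ℕ)+1)) = p.1 := by
        funext i; exact recomb_odd p i
      have he : (fun i : Fin n => extS (recomb p) (2*(i:ℕ))) = p.2 := by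
        funext i; exact recomb_even p i
      constructor
      · unfold isBilateral
        rw [total_eq, ho, he, h1, ← h1]
        exact h2
      · rw [evenUps_eq, ho]
        exact h1
    · intro s hs
      simp only [Finset.mem_filter, Finset.mem_univ, true_and] at hs
      funext j
      show (if (j:ℕ) % 2 = 1 then extS s (2*((j:ℕ)/2)+1) else extS s (2*((j:ℕ)/2))) = s j
      by_cases hp : (j:ℕ) % 2 = 1
      · rw [if_pos hp, extS_lt _ (by have := j.isLt; omega : 2*((j:ℕ)/2)+1 < 2*n)]
        congr 1
        apply Fin.ext
        show 2*((j:ℕ)/2)+1 = (j:ℕ)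
        omega
      · rw [if_neg hp, extS_lt _ (by have := j.isLt; omega : 2*((j:ℕ)/2) < 2*n)]
        congr 1
        apply Fin.ext
        show 2*((j:ℕ)/2) = (j:ℕ)
        omega
    · intro p hp
      obtain ⟨p1, p2⟩ := p
      rw [Prod.mk.injEq]
      constructor
      · funext i
        exact recomb_odd (p1, p2) i
      · funext i
        exact recomb_even (p1, p2) i
  rw [step1]
  have step2 : ((Finset.univ : Finset ((Fin n → Bool) × (Fin n → Bool))).filter
        (fun p => onesF p.1 = v ∧ onesF p.1 + onesF p.2 = n)).card
      = ((Finset.univ : Finset ((Fin n → Bool) × (Fin n → Bool))).filter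
        (fun p => onesF p.1 = v ∧ onesF p.2 = n - v)).card := by
    apply cardCongr
    intro p
    omega
  rw [step2, ← Finset.univ_product_univ, Finset.filter_product (p := fun f : Fin n → Bool => onesF f = v) (q := fun g : Fin n → Bool => onesF g = n - v)]
  rw [Finset.card_product, count_ones, count_ones]

theorem stmt16 (n v : ℕ) (hn : 1 ≤ n) (hv : v ≤ n - 1) :
    ((Finset.univ : Finset (Fin (2*n) → Bool)).filter
        (fun s => isBilateral n s ∧ evenUps n s = v)).card
      = ((Finset.univ : Finset (Fin (2*n) → Bool)).filter
        (fun s => isBilateral n s ∧ bPeaks n s = v + 1)).card := by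
  have hvn : v ≤ n := by omega
  rw [sideA n v hvn, sideB_split n v hn, sideB_value n v hn hv, Nat.choose_symm hvn]
end

section
/- For a Dyck path p of length 2n, under the checkmark bijection the peak-counting weight of the image path satisfies: if p has 2n-2v odd-band edges and 2v even-band edges, then the image has exactly v+1 peaks; equivalently, the generating polynomial identity ∑_{p ∈ D_{2n}} a^{(odd-band edges of p)} b^{(even-band edges of p)} with a=√x, b=1 specializes so that ∑_{v=0}^{n-1} N(n,v) x^{n-v} = ∑_{p ∈ D_{2n}} x^{(number of odd-position up-steps of p)}. -/
open Finset
open scoped Classical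

def chz (n : ℕ) (j : ℤ) : ℤ := if 0 ≤ j then (n.choose j.toNat : ℤ) else 0

lemma chz_pascal (n : ℕ) (j : ℤ) : chz (n+1) j = chz n j + chz n (j-1) := by
  unfold chz
  by_cases h0 : (0:ℤ) ≤ j
  · by_cases h1 : (0:ℤ) ≤ j - 1
    · have hj : j.toNat = (j-1).toNat + 1 := by omega
      simp only [h0, h1, if_true, hj, Nat.choose_succ_succ]
      push_cast; ring
    · have hj : j = 0 := by omega
      simp [hj]
  · simp [h0, show ¬ ((0:ℤ) ≤ j - 1) from by omega]
    intro h; omega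

lemma chz_neg (n : ℕ) {j : ℤ} (h : j < 0) : chz n j = 0 := by
  simp [chz, not_le.mpr h]

lemma chz_nat (n k : ℕ) : chz n (k : ℤ) = (n.choose k : ℤ) := by simp [chz]

lemma chz_zero (j : ℤ) : chz 0 j = if j = 0 then 1 else 0 := by
  unfold chz
  by_cases h0 : (0:ℤ) ≤ j
  · by_cases h1 : j = 0
    · simp [h1]
    · have : j.toNat ≠ 0 := by omega
      simp [h0, h1, Nat.choose_eq_zero_iff.mpr (by omega : 0 < j.toNat)]
  · simp [h0, show j ≠ 0 from by omega]

lemma chz_one (j : ℤ) : chz 1 j = if j = 0 then 1 else if j = 1 then 1 else 0 := by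
  have := chz_pascal 0 j
  rw [this, chz_zero, chz_zero]
  split_ifs <;> omega

def Gf : ℕ → ℤ → ℤ → ℤ
  | 0, h, k => if h = 0 ∧ k = 0 then 1 else 0
  | (m+1), h, k => chz m (k-1) * chz (m+1) (k-h) - chz m k * chz (m+1) (k-h-1)

lemma Gf_neg_k (m : ℕ) (h : ℤ) {k : ℤ} (hk : k < 0) : Gf m h k = 0 := by
  cases m with
  | zero => simp [Gf]; omega
  | succ m =>
    simp only [Gf]
    rw [chz_neg m (by omega : k - 1 < 0), chz_neg m hk]
    ring

lemma Gf_rec0 (m : ℕ) (k : ℤ) : Gf (m+1) 0 k = Gf m 0 (k-1) + Gf m 1 k := by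
  cases m with
  | zero =>
    simp only [Gf, zero_add, chz_one, chz_zero, sub_zero, true_and, and_true]
    split_ifs <;> omega
  | succ m =>
    simp only [Gf]
    rw [show k - (0:ℤ) = k from by ring, show k - 1 - (0:ℤ) = k - 1 from by ring,
        show k - 1 - 1 = k - 2 from by ring]
    have hP1 : chz (m+1+1) k = chz (m+1) k + chz (m+1) (k-1) := chz_pascal (m+1) k
    have hP2 : chz (m+1+1) (k-1) = chz (m+1) (k-1) + chz (m+1) (k-2) := by
      have := chz_pascal (m+1) (k-1); rwa [show k-1-1 = k-2 from by ring] at this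
    have hQ2 : chz (m+1) (k-1) = chz m (k-1) + chz m (k-2) := by
      have := chz_pascal m (k-1); rwa [show k-1-1 = k-2 from by ring] at this
    have hQ3 : chz (m+1) k = chz m k + chz m (k-1) := chz_pascal m k
    linear_combination (chz (m+1) (k-1)) * hP1 - (chz (m+1) k) * hP2
      + (chz (m+1) (k-1)) * hQ2 - (chz (m+1) (k-2)) * hQ3

lemma Gf_rec1 (m : ℕ) (h k : ℤ) (hh : 1 ≤ h) :
    Gf (m+1) h k = Gf m (h-1) (k-1) + Gf m h (k-1) + Gf m h k + Gf m (h+1) k := by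
  cases m with
  | zero =>
    simp only [Gf, zero_add, chz_one, chz_zero, sub_zero, true_and, and_true]
    split_ifs <;> omega
  | succ m =>
    simp only [Gf]
    rw [show k - 1 - (h-1) = k - h from by ring, show k - 1 - 1 = k - 2 from by ring,
        show k - 1 - h = k - h - 1 from by ring,
        show k - (h+1) = k - h - 1 from by ring,
        show k - h - 1 - 1 = k - h - 2 from by ring]
    have hP1 : chz (m+1+1) (k-h) = chz (m+1) (k-h) + chz (m+1) (k-h-1) := by
      have := chz_pascal (m+1) (k-h); rwa [show k-h-1 = k-h-1 from rfl] at this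
    have hP2 : chz (m+1+1) (k-h-1) = chz (m+1) (k-h-1) + chz (m+1) (k-h-2) := by
      have := chz_pascal (m+1) (k-h-1); rwa [show k-h-1-1 = k-h-2 from by ring] at this
    have hQ2 : chz (m+1) (k-1) = chz m (k-1) + chz m (k-2) := by
      have := chz_pascal m (k-1); rwa [show k-1-1 = k-2 from by ring] at this
    have hQ3 : chz (m+1) k = chz m k + chz m (k-1) := chz_pascal m k
    linear_combination (chz (m+1) (k-1)) * hP1 - (chz (m+1) k) * hP2
      + (chz (m+1) (k-h) + chz (m+1) (k-h-1)) * hQ2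
      - (chz (m+1) (k-h-1) + chz (m+1) (k-h-2)) * hQ3

/-- Recursive count of nonnegative pair-paths. -/
def gfun : ℕ → ℕ → ℕ → ℕ
  | 0, h, k => if h = 0 ∧ k = 0 then 1 else 0
  | (m+1), h, k =>
      (if 1 ≤ h ∧ 1 ≤ k then gfun m (h-1) (k-1) else 0)
    + (if 1 ≤ k then gfun m h (k-1) else 0)
    + (if 1 ≤ h then gfun m h k else 0)
    + gfun m (h+1) k

lemma gfun_eq (m h k : ℕ) : (gfun m h k : ℤ) = Gf m (h : ℤ) (k : ℤ) := by
  induction m generalizing h k with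
  | zero =>
    simp only [gfun, Gf]
    split_ifs with h1 h2 h2 <;> simp_all <;> omega
  | succ m ih =>
    cases h with
    | zero =>
      rw [Nat.cast_zero, Gf_rec0]
      cases k with
      | zero =>
        have hg : gfun (m+1) 0 0 = gfun m 1 0 := by simp [gfun]
        have h2 := ih 1 0
        push_cast at h2 ⊢
        rw [hg, Gf_neg_k m 0 (by norm_num : (-1:ℤ) < 0)]
        push_cast
        linarith
      | succ k =>
        have hg : gfun (m+1) 0 (k+1) = gfun m 0 k + gfun m 1 (k+1) := by simp [gfun]
        have h1 := ih 0 k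
        have h2 := ih 1 (k+1)
        push_cast at h1 h2 ⊢
        rw [hg, show ((k:ℤ)+1-1) = (k:ℤ) from by ring]
        push_cast
        linarith
    | succ h =>
      rw [show (((h+1:ℕ)):ℤ) = (h:ℤ)+1 from by push_cast; ring, Gf_rec1 m _ _ (by omega)]
      rw [show ((h:ℤ)+1-1) = (h:ℤ) from by ring]
      cases k with
      | zero =>
        have hg : gfun (m+1) (h+1) 0 = gfun m (h+1) 0 + gfun m (h+1+1) 0 := by simp [gfun]
        have h3 := ih (h+1) 0
        have h4 := ih (h+1+1) 0
        push_cast at h3 h4 ⊢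
        rw [hg, Gf_neg_k m _ (by norm_num : (-1:ℤ) < 0), Gf_neg_k m _ (by norm_num : (-1:ℤ) < 0)]
        push_cast
        linarith
      | succ k =>
        have hg : gfun (m+1) (h+1) (k+1)
            = gfun m h k + gfun m (h+1) k + gfun m (h+1) (k+1) + gfun m (h+1+1) (k+1) := by
          simp [gfun]
        have h1 := ih h k
        have h2 := ih (h+1) k
        have h3 := ih (h+1) (k+1)
        have h4 := ih (h+1+1) (k+1)
        push_cast at h1 h2 h3 h4 ⊢
        rw [hg, show ((k:ℤ)+1-1) = (k:ℤ) from by ring]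
        push_cast
        linarith


-- key binomial identity
lemma chid (n k : ℕ) (h1 : 1 ≤ k) (hk : k ≤ n) :
    (n-k) * ((n-1).choose (k-1) * n.choose k) = (n-k+1) * ((n-1).choose k * n.choose (k-1)) := by
  have a : n.choose k * k = n.choose (k-1) * (n-k+1) := by
    have := Nat.choose_succ_right_eq n (k-1)
    rw [show k - 1 + 1 = k from by omega, show n - (k-1) = n - k + 1 from by omega] at this
    exact this
  have b : (n-1).choose k * k = (n-1).choose (k-1) * (n-k) := by
    have := Nat.choose_succ_right_eq (n-1) (k-1)
    rw [show k - 1 + 1 = k from by omega, show (n-1) - (k-1) = n - k from by omega] at this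
    exact this
  calc (n-k) * ((n-1).choose (k-1) * n.choose k)
      = ((n-1).choose (k-1) * (n-k)) * n.choose k := by ring
    _ = ((n-1).choose k * k) * n.choose k := by rw [b]
    _ = (n-1).choose k * (n.choose k * k) := by ring
    _ = (n-1).choose k * (n.choose (k-1) * (n-k+1)) := by rw [a]
    _ = (n-k+1) * ((n-1).choose k * n.choose (k-1)) := by ring

lemma narayana_eq_sub (n k : ℕ) (h1 : 1 ≤ k) (hk : k ≤ n) :
    narayana n (n-k) = (n-1).choose (k-1) * n.choose k - (n-1).choose k * n.choose (k-1) := by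
  set A := (n-1).choose (k-1) * n.choose k with hA
  set B := (n-1).choose k * n.choose (k-1) with hB
  have key : (n-k) * A = (n-k+1) * B := chid n k h1 hk
  set j := n - k with hj
  have e : B * (j+1) = j * A := by rw [mul_comm, ← key]
  have hBA : B ≤ A := by
    rcases Nat.eq_zero_or_pos j with hj0 | hj0
    · rw [hj0] at e; simp at e; omega
    · have h2 : j * B ≤ j * A := by
        calc j * B ≤ j * B + B := Nat.le_add_right _ _
          _ = B * (j+1) := by ring
          _ = j * A := e
      exact Nat.le_of_mul_le_mul_left h2 hj0
  have hmul : A = (A - B) * (j+1) := by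
    have h3 : (A - B) * (j+1) = A * (j+1) - B * (j+1) := Nat.sub_mul A B (j+1)
    have h4 : A * (j+1) = j * A + A := by ring
    rw [h3, e, h4, Nat.add_sub_cancel_left]
  have hch1 : n.choose (n-k) = n.choose k := by
    rw [← Nat.choose_symm hk]
  have hch2 : (n-1).choose (n-k) = (n-1).choose (k-1) := by
    rw [← Nat.choose_symm (show n - k ≤ n - 1 from by omega), show n - 1 - (n-k) = k - 1 from by omega]
  unfold narayana
  rw [hch1, hch2, show n - k + 1 = n - k + 1 from rfl]
  rw [show n.choose k * (n-1).choose (k-1) = A from by rw [hA]; ring]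
  exact Nat.div_eq_of_eq_mul_left (by omega) hmul


lemma gfun_zero_k {n : ℕ} (hn : 1 ≤ n) : gfun n 0 0 = 0 := by
  obtain ⟨m, rfl⟩ : ∃ m, n = m + 1 := ⟨n-1, by omega⟩
  have hg := gfun_eq (m+1) 0 0
  simp only [Gf, Nat.cast_zero] at hg
  norm_num at hg
  rw [chz_neg m (by norm_num : (-1:ℤ) < 0)] at hg
  norm_num at hg
  rw [chz_neg (m+1) (by norm_num : (-1:ℤ) < 0)] at hg
  simp at hg
  exact_mod_cast hg

lemma gfun_nar (n k : ℕ) (h1 : 1 ≤ k) (hk : k ≤ n) : gfun n 0 k = narayana n (n-k) := by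
  obtain ⟨m, rfl⟩ : ∃ m, n = m + 1 := ⟨n-1, by omega⟩
  have hg := gfun_eq (m+1) 0 k
  simp only [Gf, Nat.cast_zero] at hg
  rw [show ((k:ℤ) - 0) = (k:ℤ) from by ring] at hg
  rw [show ((k:ℤ) - 1) = ((k-1:ℕ):ℤ) from by omega] at hg
  rw [chz_nat, chz_nat, chz_nat, chz_nat] at hg
  rw [← Nat.cast_mul, ← Nat.cast_mul] at hg
  rw [narayana_eq_sub (m+1) k h1 hk]
  simp only [Nat.add_sub_cancel]
  set a := m.choose (k-1) * (m+1).choose k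
  set b := m.choose k * (m+1).choose (k-1)
  omega

-- ===== helper lemmas =====

lemma upsTo_succ {m : ℕ} (s : Fin m → Bool) (k : ℕ) :
    upsTo s (k+1) = upsTo s k + (if extS s k = true then 1 else 0) := by
  unfold upsTo
  rw [Finset.range_add_one, Finset.filter_insert]
  split_ifs with hb
  · rw [Finset.card_insert_of_notMem (fun hmem => by
      have := Finset.mem_of_mem_filter k hmem
      exact absurd this (by simp))]
  · rw [add_zero]

def res2 {m : ℕ} (s : Fin (2*(m+1)) → Bool) : Fin (2*m) → Bool :=
  fun i => s ⟨(i : ℕ), by omega⟩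

def ext2 {m : ℕ} (t : Fin (2*m) → Bool) (b1 b2 : Bool) : Fin (2*(m+1)) → Bool :=
  fun i => if h : (i:ℕ) < 2*m then t ⟨(i:ℕ), h⟩ else if (i:ℕ) = 2*m then b1 else b2

lemma extS_res2 {m : ℕ} (s : Fin (2*(m+1)) → Bool) {j : ℕ} (hj : j < 2*m) :
    extS (res2 s) j = extS s j := by
  simp [extS, res2, hj, show j < 2*(m+1) from by omega]

lemma extS_ext2_lt {m : ℕ} (t : Fin (2*m) → Bool) (b1 b2 : Bool) {j : ℕ} (hj : j < 2*m) :
    extS (ext2 t b1 b2) j = extS t j := by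
  simp [extS, ext2, hj, show j < 2*(m+1) from by omega]

lemma extS_ext2_a {m : ℕ} (t : Fin (2*m) → Bool) (b1 b2 : Bool) :
    extS (ext2 t b1 b2) (2*m) = b1 := by
  simp [extS, ext2, show 2*m < 2*(m+1) from by omega]

lemma extS_ext2_b {m : ℕ} (t : Fin (2*m) → Bool) (b1 b2 : Bool) :
    extS (ext2 t b1 b2) (2*m+1) = b2 := by
  simp [extS, ext2, show 2*m+1 < 2*(m+1) from by omega, show ¬(2*m+1 < 2*m) from by omega,
        show ¬(2*m+1 = 2*m) from by omega]

lemma res2_ext2 {m : ℕ} (t : Fin (2*m) → Bool) (b1 b2 : Bool) :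
    res2 (ext2 t b1 b2) = t := by
  funext i
  simp [res2, ext2, i.isLt]

lemma ext2_res2 {m : ℕ} {b1 b2 : Bool} (s : Fin (2*(m+1)) → Bool)
    (hb1 : extS s (2*m) = b1) (hb2 : extS s (2*m+1) = b2) :
    ext2 (res2 s) b1 b2 = s := by
  funext i
  have hilt : (i:ℕ) < 2*(m+1) := i.isLt
  simp only [ext2, res2]
  split_ifs with h1 h2
  · rfl
  · have hi : i = ⟨2*m, by omega⟩ := Fin.ext (by simp; omega)
    have he : extS s (2*m) = s ⟨2*m, by omega⟩ := by
      simp [extS, show 2*m < 2*(m+1) from by omega]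
    rw [hi, ← hb1, he]
  · have hi : i = ⟨2*m+1, by omega⟩ := Fin.ext (by simp; omega)
    have he : extS s (2*m+1) = s ⟨2*m+1, by omega⟩ := by
      simp [extS, show 2*m+1 < 2*(m+1) from by omega]
    rw [hi, ← hb2, he]

lemma upsTo_res2 {m : ℕ} (s : Fin (2*(m+1)) → Bool) {k : ℕ} (hk : k ≤ 2*m) :
    upsTo (res2 s) k = upsTo s k :=
  upsTo_congr _ _ k (fun j hj => extS_res2 s (by omega))

lemma oddUps_succ {m : ℕ} (s : Fin (2*(m+1)) → Bool) :
    oddUps (m+1) s = oddUps m (res2 s) + (if extS s (2*m) = true then 1 else 0) := by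
  unfold oddUps
  rw [show Finset.range (2*(m+1)) = Finset.range ((2*m+1)+1) from by rw [show 2*(m+1) = (2*m+1)+1 from by ring],
      Finset.range_add_one, Finset.filter_insert,
      if_neg (fun hc => by have := hc.1; omega)]
  rw [Finset.range_add_one, Finset.filter_insert]
  have hcong : (Finset.range (2*m)).filter (fun j => j % 2 = 0 ∧ extS s j = true)
      = (Finset.range (2*m)).filter (fun j => j % 2 = 0 ∧ extS (res2 s) j = true) := by
    apply Finset.filter_congr
    intro j hj
    rw [extS_res2 s (Finset.mem_range.mp hj)]
  rw [hcong]
  by_cases hb : extS s (2*m) = true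
  · rw [if_pos ⟨by omega, hb⟩, if_pos hb,
        Finset.card_insert_of_notMem (fun hmem => by
          have := Finset.mem_of_mem_filter _ hmem
          exact absurd this (by simp))]
  · rw [if_neg (fun hc => hb hc.2), if_neg hb, add_zero]

open scoped Classical in
noncomputable def Dset (m h k : ℕ) : Finset (Fin (2*m) → Bool) :=
  Finset.univ.filter (fun s =>
    (∀ j ≤ 2*m, j ≤ 2 * upsTo s j) ∧ upsTo s (2*m) = m + h ∧ oddUps m s = k)

lemma mem_Dset {m h k : ℕ} {s : Fin (2*m) → Bool} :
    s ∈ Dset m h k ↔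
      (∀ j ≤ 2*m, j ≤ 2 * upsTo s j) ∧ upsTo s (2*m) = m + h ∧ oddUps m s = k := by
  simp [Dset]

noncomputable abbrev partS (m h k : ℕ) (b1 b2 : Bool) : Finset (Fin (2*(m+1)) → Bool) :=
  (Dset (m+1) h k).filter (fun s => extS s (2*m) = b1 ∧ extS s (2*m+1) = b2)

lemma part_facts {m h k : ℕ} {b1 b2 : Bool} {s : Fin (2*(m+1)) → Bool}
    (hs : s ∈ partS m h k b1 b2) :
    (∀ j ≤ 2*(m+1), j ≤ 2 * upsTo s j)
    ∧ upsTo s (2*m) + (if b1 = true then 1 else 0) + (if b2 = true then 1 else 0) = m+1+h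
    ∧ oddUps m (res2 s) + (if b1 = true then 1 else 0) = k
    ∧ upsTo s (2*m+1) = upsTo s (2*m) + (if b1 = true then 1 else 0) := by
  rw [Finset.mem_filter] at hs
  obtain ⟨hd, hb1, hb2⟩ := hs
  rw [mem_Dset] at hd
  obtain ⟨hdy, htot, hodd⟩ := hd
  have e1 : upsTo s (2*m+1) = upsTo s (2*m) + (if b1 = true then 1 else 0) := by
    rw [upsTo_succ, hb1]
  have e2 : upsTo s (2*m+2) = upsTo s (2*m+1) + (if b2 = true then 1 else 0) := by
    rw [upsTo_succ, hb2]
  have e3 : upsTo s (2*(m+1)) = upsTo s (2*m+2) := congrArg (upsTo s) (by ring)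
  have e4 := oddUps_succ s
  rw [hb1] at e4
  refine ⟨hdy, by omega, by omega, e1⟩

lemma part_card (m h k : ℕ) (b1 b2 : Bool) (h' k' : ℕ)
    (c1 : m + h' + (if b1 = true then 1 else 0) + (if b2 = true then 1 else 0) = m + 1 + h)
    (c2 : k' + (if b1 = true then 1 else 0) = k)
    (c3 : 2*m+1 ≤ 2*(m + h') + 2*(if b1 = true then 1 else 0)) :
    (partS m h k b1 b2).card = (Dset m h' k').card := by
  apply Finset.card_bij' (fun s _ => res2 s) (fun t _ => ext2 t b1 b2)
  · -- hi : forward membership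
    intro s hs
    obtain ⟨hdy, htot, hodd, hmid⟩ := part_facts hs
    have hd2m : 2*m ≤ 2 * upsTo s (2*m) := hdy (2*m) (by omega)
    have hu : upsTo s (2*m) = m + h' := by omega
    rw [mem_Dset]
    refine ⟨?_, ?_, by omega⟩
    · intro j hj
      rw [upsTo_res2 s hj]
      exact hdy j (by omega)
    · rw [upsTo_res2 s (le_refl _)]
      omega
  · -- hj : backward membership
    intro t ht
    rw [mem_Dset] at ht
    obtain ⟨hdy, htot, hodd⟩ := ht
    rw [Finset.mem_filter]
    have hup : ∀ j ≤ 2*m, upsTo (ext2 t b1 b2) j = upsTo t j :=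
      fun j hj => upsTo_congr _ _ j (fun i hi => extS_ext2_lt t b1 b2 (by omega))
    have e1 : upsTo (ext2 t b1 b2) (2*m+1)
        = upsTo t (2*m) + (if b1 = true then 1 else 0) := by
      rw [upsTo_succ, extS_ext2_a, hup (2*m) (le_refl _)]
    have e2 : upsTo (ext2 t b1 b2) (2*m+2)
        = upsTo (ext2 t b1 b2) (2*m+1) + (if b2 = true then 1 else 0) := by
      rw [upsTo_succ, extS_ext2_b]
    have e3 : upsTo (ext2 t b1 b2) (2*(m+1)) = upsTo (ext2 t b1 b2) (2*m+2) :=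
      congrArg _ (by ring)
    have e4 := oddUps_succ (ext2 t b1 b2)
    rw [extS_ext2_a, res2_ext2] at e4
    refine ⟨?_, extS_ext2_a t b1 b2, extS_ext2_b t b1 b2⟩
    rw [mem_Dset]
    refine ⟨?_, by omega, by omega⟩
    intro j hj
    rcases (show j ≤ 2*m ∨ j = 2*m+1 ∨ j = 2*m+2 from by omega) with hc | hc | hc
    · rw [hup j hc]; exact hdy j hc
    · rw [hc, e1, htot]; omega
    · rw [hc]
      have : upsTo (ext2 t b1 b2) (2*m+2)
          = upsTo t (2*m) + (if b1 = true then 1 else 0) + (if b2 = true then 1 else 0) := by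
        rw [e2, e1]
      omega
  · intro s hs
    rw [Finset.mem_filter] at hs
    exact ext2_res2 s hs.2.1 hs.2.2
  · intro t _
    exact res2_ext2 t b1 b2

lemma part_empty_b1 (m h k : ℕ) (b2 : Bool) (hk : k = 0) :
    (partS m h k true b2).card = 0 := by
  rw [Finset.card_eq_zero, Finset.eq_empty_iff_forall_notMem]
  intro s hs
  obtain ⟨_, _, hodd, _⟩ := part_facts hs
  simp at hodd
  omega

lemma part_empty_TT (m h k : ℕ) (hh : h = 0) :
    (partS m h k true true).card = 0 := by
  rw [Finset.card_eq_zero, Finset.eq_empty_iff_forall_notMem]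
  intro s hs
  obtain ⟨hdy, htot, _, _⟩ := part_facts hs
  have := hdy (2*m) (by omega)
  simp at htot
  omega

lemma part_empty_FT (m h k : ℕ) (hh : h = 0) :
    (partS m h k false true).card = 0 := by
  rw [Finset.card_eq_zero, Finset.eq_empty_iff_forall_notMem]
  intro s hs
  obtain ⟨hdy, htot, _, hmid⟩ := part_facts hs
  have := hdy (2*m+1) (by omega)
  simp at htot hmid
  omega

lemma Dset_card : ∀ m h k, (Dset m h k).card = gfun m h k := by
  intro m
  induction m with
  | zero =>
    intro h k
    by_cases hc : h = 0 ∧ k = 0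
    · rw [show Dset 0 h k = Finset.univ from ?_, gfun]
      · simp [hc]
      · rw [Finset.eq_univ_iff_forall]
        intro s
        rw [mem_Dset]
        refine ⟨fun j hj => by omega, ?_, ?_⟩ <;> simp [upsTo, oddUps, hc.1, hc.2]
    · rw [show Dset 0 h k = ∅ from ?_, gfun]
      · simp [hc]
      · rw [Finset.eq_empty_iff_forall_notMem]
        intro s hs
        rw [mem_Dset] at hs
        obtain ⟨_, h2, h3⟩ := hs
        simp [upsTo, oddUps] at h2 h3
        exact hc ⟨by omega, by omega⟩
  | succ m ih =>
    intro h k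
    have hfib := Finset.card_eq_sum_card_fiberwise
      (f := fun s => (extS s (2*m), extS s (2*m+1))) (s := Dset (m+1) h k)
      (t := (Finset.univ : Finset (Bool × Bool))) (fun x _ => Finset.mem_univ _)
    have hexp : (Dset (m+1) h k).card
        = (partS m h k true true).card + (partS m h k true false).card
        + (partS m h k false true).card + (partS m h k false false).card := by
      rw [hfib, Fintype.sum_prod_type]
      simp only [Fintype.sum_bool]
      have pe : ∀ b1 b2 : Bool,
          (Dset (m+1) h k).filter (fun s => (extS s (2*m), extS s (2*m+1)) = (b1, b2))
            = partS m h k b1 b2 := by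
        intro b1 b2
        apply Finset.filter_congr
        intro s _
        simp [Prod.ext_iff]
      rw [pe, pe, pe, pe]
      ring
    rw [hexp, gfun]
    have hTT : (partS m h k true true).card = if 1 ≤ h ∧ 1 ≤ k then gfun m (h-1) (k-1) else 0 := by
      split_ifs with hc
      · rw [part_card m h k true true (h-1) (k-1) (by simp; omega) (by simp; omega)
          (by simp; omega), ih]
      · rcases (show h = 0 ∨ k = 0 from by omega) with hc0 | hc0
        · exact part_empty_TT m h k hc0
        · exact part_empty_b1 m h k true hc0
    have hTF : (partS m h k true false).card = if 1 ≤ k then gfun m h (k-1) else 0 := by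
      split_ifs with hc
      · rw [part_card m h k true false h (k-1) (by simp; omega) (by simp; omega)
          (by simp; omega), ih]
      · exact part_empty_b1 m h k false (by omega)
    have hFT : (partS m h k false true).card = if 1 ≤ h then gfun m h k else 0 := by
      split_ifs with hc
      · rw [part_card m h k false true h k (by simp; omega) (by simp) (by simp; omega), ih]
      · exact part_empty_FT m h k (by omega)
    have hFF : (partS m h k false false).card = gfun m (h+1) k := by
      rw [part_card m h k false false (h+1) k (by simp; omega) (by simp) (by simp), ih]
    omega

theorem stmt18 (n : ℕ) (hn : 1 ≤ n) :
    ∑ v ∈ Finset.range n,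
        (Polynomial.C (narayana n v) : Polynomial ℕ) * Polynomial.X ^ (n - v)
      = ∑ s ∈ (Finset.univ : Finset (Fin (2*n) → Bool)).filter (fun s => isDyck n s),
        (Polynomial.X : Polynomial ℕ) ^ (oddUps n s) := by
  classical
  set F := (Finset.univ : Finset (Fin (2*n) → Bool)).filter (fun s => isDyck n s) with hF
  have hmap : ∀ s ∈ F, oddUps n s ∈ Finset.range (n+1) := by
    intro s hs
    rw [hF, Finset.mem_filter] at hs
    have hs1 : upsTo s (2*n) = n := hs.2.1
    have hsub : oddUps n s ≤ upsTo s (2*n) := by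
      apply Finset.card_le_card
      intro j hj
      rw [Finset.mem_filter] at hj ⊢
      exact ⟨hj.1, hj.2.2⟩
    rw [Finset.mem_range]
    omega
  rw [← Finset.sum_fiberwise_of_maps_to hmap (fun s => (Polynomial.X : Polynomial ℕ) ^ (oddUps n s))]
  have hfib : ∀ k, F.filter (fun s => oddUps n s = k) = Dset n 0 k := by
    intro k
    ext s
    rw [Finset.mem_filter, hF, Finset.mem_filter, mem_Dset]
    unfold isDyck
    constructor
    · rintro ⟨⟨-, h1, h2⟩, h3⟩
      exact ⟨h2, by omega, h3⟩
    · rintro ⟨h2, h1, h3⟩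
      exact ⟨⟨Finset.mem_univ _, by omega, h2⟩, h3⟩
  have hrhs : ∀ k, (∑ s ∈ F.filter (fun s => oddUps n s = k),
      (Polynomial.X : Polynomial ℕ) ^ (oddUps n s)) = gfun n 0 k • (Polynomial.X : Polynomial ℕ) ^ k := by
    intro k
    rw [Finset.sum_congr rfl (fun s hs => by
      rw [(Finset.mem_filter.mp hs).2]), Finset.sum_const, hfib, Dset_card]
  rw [Finset.sum_congr rfl (fun k _ => hrhs k)]
  rw [Finset.sum_range_succ']
  have h0 : gfun n 0 0 • (Polynomial.X : Polynomial ℕ) ^ 0 = 0 := by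
    rw [gfun_zero_k hn, zero_smul]
  rw [h0, add_zero]
  rw [← Finset.sum_range_reflect]
  apply Finset.sum_congr rfl
  intro i hi
  rw [Finset.mem_range] at hi
  have e1 : n - (n - 1 - i) = i + 1 := by omega
  have e2 : gfun n 0 (i+1) = narayana n (n - (i+1)) := gfun_nar n (i+1) (by omega) (by omega)
  have e3 : n - (i+1) = n - 1 - i := by omega
  rw [e1, e2, e3, Polynomial.smul_eq_C_mul]
end
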